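/- arXiv:2011.13550 — 9 statements merged into one kernel-verified Lean document; each statement's English description precedes it below -/
import Mathlib

section
/- Let U be a finite set and T_1,…,T_M ⊆ U with M ≥ 1, and suppose ⋃_{i=1}^{t} T_i = U for some integer 1 ≤ t ≤ M. Let γ = 0.01/M². Define w ∈ ℝ^{M+2} with coordinates (w_{T_1},…,w_{T_M}, w_one, w_gam) by w_{T_i} = −1 for i ≤ t, w_{T_i} = 0 for i > t, w_one = 1, and w_gam = γ. Then E(w) = t·γ², where E(w) = Σ_{u∈U} (max(0, w_one + Σ_{i : u∈T_i} w_{T_i}))² + Σ_{i=1}^{M} (max(0, w_gam + w_{T_i}) − γ)² + (max(0, w_one) − 1)² + (max(0, w_gam) − γ)². -/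
/-- Completeness of the Set Cover → 1-ReLU training reduction:
the weight vector induced by a set cover of size `t` incurs total squared error
exactly `t·γ²`. -/
theorem setCover_reduction_completeness
    (U : Type*) [Fintype U] [DecidableEq U]
    (M t : ℕ) (hM : 1 ≤ M) (ht1 : 1 ≤ t) (htM : t ≤ M)
    (T : Fin M → Finset U)
    (hcover : ∀ u : U, ∃ i : Fin M, (i : ℕ) < t ∧ u ∈ T i) :
    let γ : ℝ := 0.01 / (M : ℝ) ^ 2
    let wT : Fin M → ℝ := fun i => if (i : ℕ) < t then -1 else 0
    let wone : ℝ := 1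
    let wgam : ℝ := γ
    (∑ u : U, (max 0 (wone + ∑ i ∈ Finset.univ.filter (fun i => u ∈ T i), wT i)) ^ 2)
      + (∑ i : Fin M, (max 0 (wgam + wT i) - γ) ^ 2)
      + (max 0 wone - 1) ^ 2 + (max 0 wgam - γ) ^ 2
      = (t : ℝ) * γ ^ 2 := by
  intro γ wT wone wgam
  have hMpos : (0 : ℝ) < (M : ℝ) ^ 2 := by positivity
  have hγpos : 0 < γ := by positivity
  have hγlt : γ < 1 := by
    have h1 : (1 : ℝ) ≤ (M : ℝ) ^ 2 := by
      have : (1 : ℝ) ≤ (M : ℝ) := by exact_mod_cast hM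
      nlinarith
    rw [div_lt_one hMpos]
    linarith
  -- first sum is zero
  have hsum1 : ∀ u : U,
      (max 0 (wone + ∑ i ∈ Finset.univ.filter (fun i => u ∈ T i), wT i)) ^ 2 = 0 := by
    intro u
    obtain ⟨i₀, hi₀t, hi₀T⟩ := hcover u
    have hle : (∑ i ∈ Finset.univ.filter (fun i => u ∈ T i), wT i) ≤ -1 := by
      have h1 : (1 : ℝ) ≤ ∑ i ∈ Finset.univ.filter (fun i => u ∈ T i), (-wT i) := by
        have := Finset.single_le_sum (f := fun i => -wT i)
          (fun i _ => by simp only [wT]; split <;> norm_num)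
          (by simp [hi₀T] : i₀ ∈ Finset.univ.filter (fun i => u ∈ T i))
        simpa [wT, hi₀t] using this
      have : (∑ i ∈ Finset.univ.filter (fun i => u ∈ T i), (-wT i))
          = -∑ i ∈ Finset.univ.filter (fun i => u ∈ T i), wT i := by
        rw [Finset.sum_neg_distrib]
      linarith [h1.trans_eq this]
    have : max 0 (wone + ∑ i ∈ Finset.univ.filter (fun i => u ∈ T i), wT i) = 0 := by
      apply max_eq_left
      simp only [wone]; linarith
    rw [this]; ring
  -- second sum
  have hterm : ∀ i : Fin M, (max 0 (wgam + wT i) - γ) ^ 2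
      = if (i : ℕ) < t then γ ^ 2 else 0 := by
    intro i
    by_cases h : (i : ℕ) < t
    · simp only [wT, wgam, h, if_true]
      have : max 0 (γ + -1) = 0 := max_eq_left (by linarith)
      rw [this]; ring
    · simp only [wT, wgam, h, if_false]
      have : max 0 (γ + 0) = γ := by rw [add_zero]; exact max_eq_right hγpos.le
      rw [this]; ring
  have hcard : (Finset.univ.filter fun i : Fin M => (i : ℕ) < t).card = t := by
    have hsub : ∀ m ∈ Finset.range t, m < M := fun m hm =>
      lt_of_lt_of_le (Finset.mem_range.mp hm) htM
    have : (Finset.univ.filter fun i : Fin M => (i : ℕ) < t)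
        = (Finset.range t).attachFin hsub := by
      ext i
      simp [Finset.mem_attachFin]
    rw [this, Finset.card_attachFin, Finset.card_range]
  have hsum2 : (∑ i : Fin M, (max 0 (wgam + wT i) - γ) ^ 2) = (t : ℝ) * γ ^ 2 := by
    calc (∑ i : Fin M, (max 0 (wgam + wT i) - γ) ^ 2)
        = ∑ i : Fin M, if (i : ℕ) < t then γ ^ 2 else 0 := by
          exact Finset.sum_congr rfl fun i _ => hterm i
      _ = (t : ℝ) * γ ^ 2 := by
          rw [Finset.sum_ite, Finset.sum_const_zero, Finset.sum_const, hcard]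
          simp [mul_comm]
  have h3 : (max 0 wone - 1) ^ 2 = 0 := by
    simp only [wone]; norm_num
  have h4 : (max 0 wgam - γ) ^ 2 = 0 := by
    have : max 0 wgam = γ := max_eq_right hγpos.le
    rw [this]; ring
  rw [Finset.sum_eq_zero (fun u _ => hsum1 u), hsum2, h3, h4]
  ring
end

section
/- Let U be a finite set and T_1,…,T_M ⊆ U with M ≥ 1, let 1 ≤ t ≤ M be an integer, and let γ = 0.01/M². Suppose w ∈ ℝ^{M+2} (with coordinates w_{T_1},…,w_{T_M}, w_one, w_gam) satisfies E(w) ≤ γ²·t, where E(w) = Σ_{u∈U} (max(0, w_one + Σ_{i : u∈T_i} w_{T_i}))² + Σ_{i=1}^{M} (max(0, w_gam + w_{T_i}) − γ)² + (max(0, w_one) − 1)² + (max(0, w_gam) − γ)². Then the index set I = {i ∈ {1,…,M} : w_{T_i} < −w_gam} satisfies ⋃_{i∈I} T_i = U and |I| ≤ t. -/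
set_option maxHeartbeats 1000000

lemma sq_bound' {x c : ℝ} (h : x ^ 2 ≤ c ^ 2) (hc : 0 ≤ c) : -c ≤ x ∧ x ≤ c := by
  constructor <;> nlinarith [sq_nonneg (x + c), sq_nonneg (x - c)]

/-- Soundness of the Set Cover → 1-ReLU training reduction:
if the total squared error of a weight vector is at most `γ²·t`, then the
subsets whose weight is below `−w_gam` form a set cover of size at most `t`. -/
theorem setCover_reduction_soundness
    (U : Type*) [Fintype U] [DecidableEq U]
    (M t : ℕ) (hM : 1 ≤ M) (ht1 : 1 ≤ t) (htM : t ≤ M)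
    (T : Fin M → Finset U)
    (γ : ℝ) (hγ : γ = 0.01 / (M : ℝ) ^ 2)
    (wT : Fin M → ℝ) (wone wgam : ℝ)
    (hE : (∑ u : U, (max 0 (wone + ∑ i ∈ Finset.univ.filter (fun i => u ∈ T i), wT i)) ^ 2)
        + (∑ i : Fin M, (max 0 (wgam + wT i) - γ) ^ 2)
        + (max 0 wone - 1) ^ 2 + (max 0 wgam - γ) ^ 2
        ≤ γ ^ 2 * (t : ℝ)) :
    (∀ u : U, ∃ i : Fin M, wT i < -wgam ∧ u ∈ T i) ∧
      (Finset.univ.filter (fun i : Fin M => wT i < -wgam)).card ≤ t := by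
  have hM1 : (1:ℝ) ≤ (M:ℝ) := by exact_mod_cast hM
  have hMpos : (0:ℝ) < (M:ℝ) := by linarith
  have htR : (t:ℝ) ≤ (M:ℝ) := by exact_mod_cast htM
  have hγpos : 0 < γ := by rw [hγ]; positivity
  set c : ℝ := γ * M with hcdef
  have hcpos : 0 < c := mul_pos hγpos hMpos
  have hc : c = 0.01 / M := by
    rw [hcdef, hγ]; field_simp
  have hc001 : c ≤ 0.01 := by
    rw [hc, div_le_iff₀ hMpos]; nlinarith
  have hcM : c * M = 0.01 := by
    rw [hc]; field_simp
  have hγc : γ ≤ c := by nlinarith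
  have hγt : γ ^ 2 * (t:ℝ) ≤ c ^ 2 := by
    have h1 : γ ^ 2 * (t:ℝ) ≤ γ ^ 2 * (M:ℝ) := mul_le_mul_of_nonneg_left htR (sq_nonneg γ)
    have h2 : γ ^ 2 * (M:ℝ) ≤ γ ^ 2 * (M:ℝ) ^ 2 := by nlinarith [sq_nonneg γ]
    have h3 : c ^ 2 = γ ^ 2 * (M:ℝ) ^ 2 := by rw [hcdef]; ring
    linarith
  set A := ∑ u : U, (max 0 (wone + ∑ i ∈ Finset.univ.filter (fun i => u ∈ T i), wT i)) ^ 2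
    with hAdef
  set B := ∑ i : Fin M, (max 0 (wgam + wT i) - γ) ^ 2 with hBdef
  have hA0 : 0 ≤ A := Finset.sum_nonneg fun _ _ => sq_nonneg _
  have hB0 : 0 ≤ B := Finset.sum_nonneg fun _ _ => sq_nonneg _
  have hC0 : (0:ℝ) ≤ (max 0 wone - 1) ^ 2 := sq_nonneg _
  have hD0 : (0:ℝ) ≤ (max 0 wgam - γ) ^ 2 := sq_nonneg _
  -- bound wone from below
  have hC : (max 0 wone - 1) ^ 2 ≤ c ^ 2 := by linarith
  have hmone : 1 - c ≤ max 0 wone := by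
    have := (sq_bound' hC hcpos.le).1
    linarith
  have hwpos : 0 < wone := by
    rcases le_or_gt wone 0 with h | h
    · exfalso; rw [max_eq_left h] at hmone; linarith
    · exact h
  have hwone : 1 - c ≤ wone := by rwa [max_eq_right hwpos.le] at hmone
  -- bound wgam from above
  have hD : (max 0 wgam - γ) ^ 2 ≤ c ^ 2 := by linarith
  have hgam2 : wgam ≤ 2 * c := by
    have h1 := (sq_bound' hD hcpos.le).2
    have h2 : wgam ≤ max 0 wgam := le_max_right _ _
    linarith
  constructor
  · -- cover property
    intro u
    set s := Finset.univ.filter (fun i : Fin M => u ∈ T i) with hsdef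
    set S := ∑ i ∈ s, wT i with hSdef
    have hAu : (max 0 (wone + S)) ^ 2 ≤ c ^ 2 := by
      have hle : (max 0 (wone + S)) ^ 2 ≤ A := by
        rw [hAdef]
        exact Finset.single_le_sum
          (f := fun v : U => (max 0 (wone + ∑ i ∈ Finset.univ.filter (fun i => v ∈ T i), wT i)) ^ 2)
          (fun i _ => sq_nonneg _) (Finset.mem_univ u)
      linarith
    have hS : wone + S ≤ c := by
      have h1 := (sq_bound' hAu hcpos.le).2
      have h2 : wone + S ≤ max 0 (wone + S) := le_max_right _ _
      linarith
    have hSup : S ≤ 2 * c - 1 := by linarith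
    by_contra hcon
    push_neg at hcon
    have hlow : ∀ i ∈ s, -wgam ≤ wT i := by
      intro i hi
      by_contra h
      push_neg at h
      exact hcon i h (Finset.mem_filter.mp hi).2
    have hcardM : (s.card : ℝ) ≤ (M:ℝ) := by
      have h1 : s.card ≤ Fintype.card (Fin M) := Finset.card_le_univ s
      rw [Fintype.card_fin] at h1
      exact_mod_cast h1
    have hSlow : (s.card : ℝ) * (-wgam) ≤ S := by
      calc (s.card : ℝ) * (-wgam) = ∑ _i ∈ s, (-wgam) := by
            rw [Finset.sum_const, nsmul_eq_mul]
        _ ≤ ∑ i ∈ s, wT i := Finset.sum_le_sum hlow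
    have hwc : wgam * (s.card : ℝ) ≤ 2 * c * (M:ℝ) := by
      have h1 : wgam * (s.card : ℝ) ≤ 2 * c * (s.card : ℝ) :=
        mul_le_mul_of_nonneg_right hgam2 (Nat.cast_nonneg _)
      have h2 : 2 * c * (s.card : ℝ) ≤ 2 * c * (M:ℝ) :=
        mul_le_mul_of_nonneg_left hcardM (by linarith)
      linarith
    have : (0.02 : ℝ) = 2 * c * M := by rw [mul_assoc, hcM]; norm_num
    nlinarith
  · -- cardinality bound
    set I := Finset.univ.filter (fun i : Fin M => wT i < -wgam) with hIdef
    have hkey : (I.card : ℝ) * γ ^ 2 ≤ B := by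
      calc (I.card : ℝ) * γ ^ 2 = ∑ _i ∈ I, γ ^ 2 := by
            rw [Finset.sum_const, nsmul_eq_mul]
        _ = ∑ i ∈ I, (max 0 (wgam + wT i) - γ) ^ 2 := by
            refine Finset.sum_congr rfl fun i hi => ?_
            have h1 : wT i < -wgam := (Finset.mem_filter.mp hi).2
            have h2 : wgam + wT i ≤ 0 := by linarith
            rw [max_eq_left h2]; ring
        _ ≤ B := by
            rw [hBdef]
            exact Finset.sum_le_sum_of_subset_of_nonneg (Finset.filter_subset _ _)
              (fun i _ _ => sq_nonneg _)
    have hBle : B ≤ γ ^ 2 * (t:ℝ) := by linarith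
    have hγ2pos : 0 < γ ^ 2 := by positivity
    have hcard : (I.card : ℝ) ≤ (t:ℝ) := by
      have : (I.card : ℝ) * γ ^ 2 ≤ (t:ℝ) * γ ^ 2 := by linarith [mul_comm (γ ^ 2) (t:ℝ)]
      exact le_of_mul_le_mul_right this hγ2pos
    exact_mod_cast hcard
end

section
/- Let G = (V,E) be a finite simple graph with N = |V| ≥ 1 vertices and M = |E| ≥ 1 edges, in which every vertex has degree at most d (d ≥ 1). Let κ ≥ 1 be an integer with κ ≤ N, let ℓ ≥ 0, and suppose T ⊆ V with |T| = κ induces at least ℓ edges. Set δ = 1/(2√κ), γ = 1/(1000d), ζ = 1/(10^{10} d²), and OPT = (1−γ)ζ·(1 − κδ/(√2·N) + κδ²/(8N)) + γζ·(1 − ℓδ/(2√2·M) + ℓδ²/(32M)). Define w = ((w_v)_{v∈V}, w_*) ∈ ℝ^{N+1} by w_* = 1/√2, w_v = 1/√(2κ) for v ∈ T and w_v = 0 otherwise. Then ‖w‖₂ = 1 and L(w) ≤ OPT, where L(w) = (1−ζ)·(1/√2 − max(0, w_*))² + ((1−γ)ζ/N)·Σ_{v∈V} (1 − (1/2)·max(0,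 w_v − δ w_*))² + (γζ/M)·Σ_{{u,v}∈E} (1 − (1/2)·max(0, w_u + w_v − 3.5·δ w_*))². -/
set_option maxHeartbeats 1000000


/-- Completeness of the Densest κ-Subgraph → bounded 1-ReLU training
reduction: the weight vector induced by a set `T` of `κ` vertices inducing at
least `ℓ` edges has unit norm and loss at most `OPT`. -/
theorem dks_reduction_completeness
    (V : Type*) [Fintype V] [DecidableEq V]
    (G : SimpleGraph V) [DecidableRel G.Adj]
    (d κ : ℕ) (ℓ : ℝ) (N M : ℕ)
    (hN : N = Fintype.card V) (hM : M = G.edgeFinset.card)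
    (hN1 : 1 ≤ N) (hM1 : 1 ≤ M) (hd : 1 ≤ d)
    (hdeg : ∀ v : V, G.degree v ≤ d)
    (hκ1 : 1 ≤ κ) (hκN : κ ≤ N) (hℓ : 0 ≤ ℓ)
    (T : Finset V) (hTcard : T.card = κ)
    (hTind : ℓ ≤ ((G.edgeFinset ∩ T.sym2).card : ℝ)) :
    let δ : ℝ := 1 / (2 * Real.sqrt κ)
    let γ : ℝ := 1 / (1000 * (d : ℝ))
    let ζ : ℝ := 1 / (10 ^ 10 * (d : ℝ) ^ 2)
    let OPT : ℝ := (1 - γ) * ζ * (1 - (κ : ℝ) * δ / (Real.sqrt 2 * N) + (κ : ℝ) * δ ^ 2 / (8 * N))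
      + γ * ζ * (1 - ℓ * δ / (2 * Real.sqrt 2 * M) + ℓ * δ ^ 2 / (32 * M))
    let ws : ℝ := 1 / Real.sqrt 2
    let w : V → ℝ := fun v => if v ∈ T then 1 / Real.sqrt (2 * κ) else 0
    ((∑ v : V, (w v) ^ 2) + ws ^ 2 = 1) ∧
    (1 - ζ) * (1 / Real.sqrt 2 - max 0 ws) ^ 2
      + ((1 - γ) * ζ / N) * ∑ v : V, (1 - (1 / 2) * max 0 (w v - δ * ws)) ^ 2
      + (γ * ζ / M) * ∑ e ∈ G.edgeFinset,
          Sym2.lift ⟨fun u v => (1 - (1 / 2) * max 0 (w u + w v - 3.5 * δ * ws)) ^ 2,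
            by intro a b; dsimp only; rw [add_comm (w a) (w b)]⟩ e
      ≤ OPT := by
  intro δ γ ζ OPT ws w
  have hs2 : (0:ℝ) < Real.sqrt 2 := Real.sqrt_pos.2 (by norm_num)
  have hs2sq : Real.sqrt 2 ^ 2 = 2 := Real.sq_sqrt (by norm_num)
  have hκpos : (0:ℝ) < κ := by exact_mod_cast hκ1
  have hsκ : (0:ℝ) < Real.sqrt κ := Real.sqrt_pos.2 hκpos
  have hsκsq : Real.sqrt κ ^ 2 = κ := Real.sq_sqrt hκpos.le
  have hsκ1 : (1:ℝ) ≤ Real.sqrt κ := by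
    rw [show (1:ℝ) = Real.sqrt 1 by simp]
    exact Real.sqrt_le_sqrt (by exact_mod_cast hκ1)
  have hs21 : (1:ℝ) ≤ Real.sqrt 2 := by
    rw [show (1:ℝ) = Real.sqrt 1 by simp]
    exact Real.sqrt_le_sqrt (by norm_num)
  have h2κ : Real.sqrt (2 * κ) = Real.sqrt 2 * Real.sqrt κ := Real.sqrt_mul (by norm_num) _
  set u : ℝ := 1 / (Real.sqrt 2 * Real.sqrt κ) with hu_def
  have hu0 : 0 < u := by positivity
  have hu1 : u ≤ 1 := by
    rw [hu_def, div_le_one (by positivity)]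
    nlinarith
  have hu2 : u ^ 2 * κ = 1 / 2 := by
    rw [hu_def, div_pow, one_pow, mul_pow, hs2sq, hsκsq]
    field_simp
  have hwval : ∀ v : V, w v = if v ∈ T then u else 0 := by
    intro v
    simp only [w, h2κ, hu_def]
  have hδws : δ * ws = u / 2 := by
    simp only [δ, ws, hu_def]
    field_simp
  have hNpos : (0:ℝ) < N := by exact_mod_cast hN1
  have hMpos : (0:ℝ) < M := by exact_mod_cast hM1
  have hdpos : (0:ℝ) < d := by exact_mod_cast hd
  constructor
  · have hws2 : ws ^ 2 = 1 / 2 := by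
      simp only [ws, div_pow, one_pow, hs2sq]
    have hsum : ∑ v : V, w v ^ 2 = (κ:ℝ) * u ^ 2 := by
      calc ∑ v : V, w v ^ 2 = ∑ v : V, (if v ∈ T then u ^ 2 else 0) := by
            refine Finset.sum_congr rfl fun v _ => ?_
            rw [hwval v]
            by_cases hv : v ∈ T <;> simp [hv]
        _ = ∑ v ∈ T, u ^ 2 := by rw [Finset.sum_ite_mem, Finset.univ_inter]
        _ = (κ:ℝ) * u ^ 2 := by rw [Finset.sum_const, hTcard, nsmul_eq_mul]
    rw [hsum, hws2]
    nlinarith [hu2]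
  · -- loss bound
    have h35 : (3.5 : ℝ) * δ * ws = 7 / 4 * u := by
      rw [mul_assoc, hδws]; ring
    have hA : (∑ v : V, (1 - (1 / 2) * max 0 (w v - δ * ws)) ^ 2)
        = (κ:ℝ) * ((1 - u/4)^2 - 1) + N := by
      have hterm : ∀ v : V, (1 - (1 / 2) * max 0 (w v - δ * ws)) ^ 2
          = (if v ∈ T then ((1 - u/4)^2 - 1) else 0) + 1 := by
        intro v
        rw [hwval v, hδws]
        by_cases hv : v ∈ T
        · rw [if_pos hv, if_pos hv, max_eq_right (by linarith)]
          ring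
        · rw [if_neg hv, if_neg hv, max_eq_left (by linarith)]
          norm_num
      have hcongr : (∑ v : V, (1 - (1 / 2) * max 0 (w v - δ * ws)) ^ 2)
          = ∑ v : V, ((if v ∈ T then ((1 - u/4)^2 - 1) else 0) + 1) :=
        Finset.sum_congr rfl fun v _ => hterm v
      rw [hcongr, Finset.sum_add_distrib,
        Finset.sum_ite_mem, Finset.univ_inter, Finset.sum_const, Finset.sum_const,
        hTcard, Finset.card_univ, ← hN, nsmul_eq_mul, nsmul_eq_mul]
      ring
    have hcE : ((1:ℝ) - u/8)^2 - 1 ≤ 0 := by nlinarith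
    have hB : (∑ e ∈ G.edgeFinset,
          Sym2.lift ⟨fun a b => (1 - (1 / 2) * max 0 (w a + w b - 3.5 * δ * ws)) ^ 2,
            by intro a b; dsimp only; rw [add_comm (w a) (w b)]⟩ e)
        ≤ ℓ * ((1 - u/8)^2 - 1) + M := by
      calc (∑ e ∈ G.edgeFinset,
          Sym2.lift ⟨fun a b => (1 - (1 / 2) * max 0 (w a + w b - 3.5 * δ * ws)) ^ 2,
            by intro a b; dsimp only; rw [add_comm (w a) (w b)]⟩ e)
          ≤ ∑ e ∈ G.edgeFinset, ((if e ∈ T.sym2 then ((1 - u/8)^2 - 1) else 0) + 1) := by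
            refine Finset.sum_le_sum fun e he => ?_
            clear he
            induction e using Sym2.ind with
            | _ x y =>
              rw [Sym2.lift_mk]
              dsimp only
              rw [hwval x, hwval y, h35]
              by_cases hx : x ∈ T <;> by_cases hy : y ∈ T
              · rw [if_pos hx, if_pos hy, if_pos (Finset.mk_mem_sym2_iff.mpr ⟨hx, hy⟩),
                  max_eq_right (by linarith)]
                apply le_of_eq; ring
              · rw [if_pos hx, if_neg hy,
                  if_neg (fun h => hy (Finset.mk_mem_sym2_iff.mp h).2),
                  max_eq_left (by linarith)]
                norm_num
              · rw [if_neg hx, if_pos hy,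
                  if_neg (fun h => hx (Finset.mk_mem_sym2_iff.mp h).1),
                  max_eq_left (by linarith)]
                norm_num
              · rw [if_neg hx, if_neg hy,
                  if_neg (fun h => hx (Finset.mk_mem_sym2_iff.mp h).1),
                  max_eq_left (by linarith)]
                norm_num
        _ = ((G.edgeFinset ∩ T.sym2).card : ℝ) * ((1 - u/8)^2 - 1) + M := by
            rw [Finset.sum_add_distrib, Finset.sum_ite_mem, Finset.sum_const,
              Finset.sum_const, nsmul_eq_mul, nsmul_eq_mul, ← hM]
            ring
        _ ≤ ℓ * ((1 - u/8)^2 - 1) + M := by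
            have := mul_le_mul_of_nonpos_right hTind hcE
            linarith
    have h0 : (1 - ζ) * (1 / Real.sqrt 2 - max 0 ws) ^ 2 = 0 := by
      have hm : max 0 ws = ws := max_eq_right (by simp only [ws]; positivity)
      rw [hm]
      simp only [ws]
      ring
    have hC2 : (0:ℝ) ≤ γ * ζ / M := by
      simp only [γ, ζ]; positivity
    -- key algebraic identities
    have hδu : δ / Real.sqrt 2 = u / 2 := by
      simp only [δ, hu_def]
      field_simp
    have hδ2 : (κ:ℝ) * δ ^ 2 = 1 / 4 := by
      simp only [δ]
      rw [div_pow, one_pow, mul_pow]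
      field_simp
      nlinarith [hsκsq]
    have hδu2 : δ / (2 * Real.sqrt 2) = u / 4 := by
      simp only [δ, hu_def]
      field_simp
      ring
    have hδ2u : δ ^ 2 = u ^ 2 / 2 := by
      have ha1 : δ ^ 2 = 1 / (4 * (κ:ℝ)) := by
        simp only [δ]
        rw [div_pow, one_pow, mul_pow, hsκsq]
        norm_num
      have ha2 : u ^ 2 = 1 / (2 * (κ:ℝ)) := by
        rw [hu_def, div_pow, one_pow, mul_pow, hs2sq, hsκsq]
      rw [ha1, ha2]
      field_simp
      ring
    have e1 : (κ:ℝ) * ((1 - u/4)^2 - 1) + N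
        = N - (κ:ℝ) * δ / Real.sqrt 2 + (κ:ℝ) * δ ^ 2 / 8 := by
      rw [mul_div_assoc, hδu, hδ2]
      linear_combination (1/16 : ℝ) * hu2
    have e2 : ℓ * ((1 - u/8)^2 - 1) + (M:ℝ)
        = M - ℓ * δ / (2 * Real.sqrt 2) + ℓ * δ ^ 2 / 32 := by
      rw [mul_div_assoc, hδu2, hδ2u]
      ring
    have key : ((1 - γ) * ζ / N) * ((κ:ℝ) * ((1 - u/4)^2 - 1) + N)
        + (γ * ζ / M) * (ℓ * ((1 - u/8)^2 - 1) + M) = OPT := by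
      rw [e1, e2]
      simp only [OPT]
      field_simp
    rw [hA, h0]
    have hmul := mul_le_mul_of_nonneg_left hB hC2
    linarith [key, hmul]
end

section
/- Let G = (V,E) be a finite simple graph with N = |V| ≥ 1 vertices and M = |E| ≥ 1 edges, in which every vertex has degree at most d (d ≥ 1), and assume M ≥ N/5. Let κ be an integer with 2 ≤ κ ≤ N and let ℓ satisfy κ/3 ≤ ℓ ≤ M. Suppose that for every T ⊆ V with |T| ≤ 1000κ, the number of edges induced by T is less than ℓ/1000. Set δ = 1/(2√κ), γ = 1/(1000d), ζ = 1/(10^{10} d²), OPT = (1−γ)ζ·(1 − κδ/(√2·N) + κδ²/(8N)) + γζ·(1 − ℓδ/(2√2·M) + ℓδ²/(32M)), and ε = γζ·ℓδ/(4√2·M) − (1−γ)ζ·κδ²/(8N) − γζ·ℓδ²/(32M). Then for every w = ((w_v)_{v∈V}, w_*) ∈ ℝ^{N+1} with ‖w‖₂ ≤ 1: L(w) > OPT + ε, where L(w) = (1−ζ)·(1/√2 − max(0, w_*))² + ((1−γ)ζ/N)·Σ_{v∈V} (1 − (1/2)·max(0, w_v − δ w_*))² + (γζ/M)·Σ_{{u,v}∈E}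 (1 − (1/2)·max(0, w_u + w_v − 3.5·δ w_*))². -/
open Finset

section Helpers

lemma vertIneq (t w b : ℝ) (ht : 0 < t) (hb0 : 0 ≤ b) (hb : b ≤ 0.005006) :
    max 0 (w - t) - (max 0 (w - t))^2/4 + (max 0 (w - 2*t))^2/(8*t) + b * max 0 (w - 2.3*t)
      ≤ w^2/(4*t) := by
  have key : (w - t) + (w - 2*t)^2/(4*t) = w^2/(4*t) := by field_simp; ring
  have h5 : (w-2*t)^2/(8*t) + (w-2*t)^2/(8*t) = (w-2*t)^2/(4*t) := by ring
  rcases le_or_gt w t with h1 | h1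
  · rw [max_eq_left (by linarith), max_eq_left (by linarith), max_eq_left (by linarith)]
    have : (0:ℝ) ≤ w^2/(4*t) := by positivity
    simp only [ne_eq, OfNat.ofNat_ne_zero, not_false_eq_true, zero_pow, zero_div, mul_zero]
    linarith
  rcases le_or_gt w (2*t) with h2 | h2
  · rw [max_eq_right (by linarith), max_eq_left (by linarith), max_eq_left (by linarith)]
    have e1 : w - t ≤ w^2/(4*t) := by
      rw [le_div_iff₀ (by positivity)]
      nlinarith [sq_nonneg (w - 2*t)]
    have e2 : (0:ℝ) ≤ (w-t)^2/4 := by positivity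
    simp only [ne_eq, OfNat.ofNat_ne_zero, not_false_eq_true, zero_pow, zero_div, mul_zero]
    linarith
  rcases le_or_gt w (2.3*t) with h3 | h3
  · rw [max_eq_right (by linarith), max_eq_right (by linarith), max_eq_left (by linarith)]
    have e2 : (0:ℝ) ≤ (w-t)^2/4 := by positivity
    have e3 : (0:ℝ) ≤ (w-2*t)^2/(8*t) := by positivity
    linarith
  · rw [max_eq_right (by linarith), max_eq_right (by linarith), max_eq_right (by linarith)]
    have h4 : b * (w - 2.3*t) ≤ (w - 2*t)^2/(8*t) := by
      rw [le_div_iff₀ (by positivity)]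
      nlinarith [sq_nonneg (w - 2.3*t), mul_nonneg hb0 ht.le, sq_nonneg t, mul_pos ht ht]
    have e2 : (0:ℝ) ≤ (w-t)^2/4 := by positivity
    linarith

lemma edgeLight (t a b : ℝ) (h : a ≤ 1.2*t ∨ b ≤ 1.2*t) :
    max 0 (a + b - 3.5*t) ≤ max 0 (a - 2.3*t) + max 0 (b - 2.3*t) := by
  have ha := le_max_left (0:ℝ) (a - 2.3*t)
  have hb := le_max_left (0:ℝ) (b - 2.3*t)
  have ha2 := le_max_right (0:ℝ) (a - 2.3*t)
  have hb2 := le_max_right (0:ℝ) (b - 2.3*t)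
  apply max_le (by linarith)
  rcases h with h | h
  · linarith
  · linarith

lemma edgeHeavy (t a b : ℝ) (ht : 0 < t) :
    max 0 (a + b - 3.5*t) ≤ max 0 (a - 2*t) + max 0 (b - 2*t) + 0.5*t := by
  have ha := le_max_left (0:ℝ) (a - 2*t)
  have hb := le_max_left (0:ℝ) (b - 2*t)
  have ha2 := le_max_right (0:ℝ) (a - 2*t)
  have hb2 := le_max_right (0:ℝ) (b - 2*t)
  apply max_le (by linarith) (by linarith)

lemma amgm (z c β : ℝ) (hc : 0 < c) : β*z ≤ z^2/(8*c) + 2*β^2*c := by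
  rw [← sub_nonneg]
  have : z^2/(8*c) + 2*β^2*c - β*z = (z - 4*β*c)^2/(8*c) := by field_simp; ring
  rw [this]; positivity

lemma sLem (s r2 : ℝ) (h2 : r2^2 = 2) (hr2 : 0 < r2) (hs1 : 1/2 < s) (hs2 : s ≤ 1) :
    1 - s^2 ≤ s/r2 + 5*s*(max 0 (1/r2 - s)) := by
  set u := 1/r2 with hu
  have hru : r2 * u = 1 := by rw [hu]; field_simp
  have h2u : 2*u^2 = 1 := by nlinarith
  have hr2u : r2 = 2*u := by nlinarith
  have hupos : 0 < u := by rw [hu]; positivity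
  have hulel : u < 1 := by nlinarith
  have hsdiv : s/r2 = s*u := by rw [hu]; ring
  rcases le_or_gt u s with h | h
  · rw [max_eq_left (by linarith)]
    nlinarith [mul_nonneg (by linarith : (0:ℝ) ≤ s - u) (by linarith : (0:ℝ) ≤ s + 2*u)]
  · rw [max_eq_right (by linarith)]
    nlinarith [mul_nonneg (by linarith : (0:ℝ) ≤ u - s) (by linarith : (0:ℝ) ≤ 2*s - u)]

lemma hs_lemma {V : Type*} [Fintype V] [DecidableEq V] (G : SimpleGraph V) [DecidableRel G.Adj]
    (d : ℕ) (hdeg : ∀ v : V, G.degree v ≤ d)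
    (F : V → ℝ) (hF : ∀ v, 0 ≤ F v) (Fl : Sym2 V → ℝ)
    (hFl : ∀ a b : V, Fl s(a,b) = F a + F b) :
    ∑ e ∈ G.edgeFinset, Fl e ≤ (d : ℝ) * ∑ v, F v := by
  have key : ∀ e ∈ G.edgeFinset,
      Fl e = ∑ v ∈ Finset.univ.filter (· ∈ e), F v := by
    intro e he
    induction e with
    | _ a b =>
      have hadj : G.Adj a b := (SimpleGraph.mem_edgeSet G).mp (SimpleGraph.mem_edgeFinset.mp he)
      have hab : a ≠ b := hadj.ne
      have hfil : Finset.univ.filter (· ∈ s(a,b)) = {a, b} := by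
        ext v; simp [Sym2.mem_iff]
      rw [hfil, Finset.sum_pair hab, hFl]
  rw [Finset.sum_congr rfl key]
  have swap : ∑ e ∈ G.edgeFinset, ∑ v ∈ Finset.univ.filter (· ∈ e), F v
      = ∑ v : V, (G.degree v : ℝ) * F v := by
    simp_rw [Finset.sum_filter]
    rw [Finset.sum_comm]
    congr 1
    ext v
    rw [← Finset.sum_filter]
    have : G.edgeFinset.filter (fun e => v ∈ e) = G.incidenceFinset v := by
      rw [SimpleGraph.incidenceFinset_eq_filter]
    rw [this, Finset.sum_const, SimpleGraph.card_incidenceFinset_eq_degree]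
    simp [mul_comm]
  rw [swap, Finset.mul_sum]
  apply Finset.sum_le_sum
  intro v _
  have h1 : (G.degree v : ℝ) ≤ (d : ℝ) := by exact_mod_cast hdeg v
  exact mul_le_mul_of_nonneg_right h1 (hF v)

lemma edge_cover {V : Type*} [DecidableEq V] (S : Finset (Sym2 V)) :
    ∃ T : Finset V, T.card ≤ 2 * S.card ∧ ∀ e ∈ S, e ∈ T.sym2 := by
  classical
  induction S using Finset.induction_on with
  | empty => exact ⟨∅, by simp⟩
  | insert _ _ hnotmem ih =>
    rename_i e S'
    obtain ⟨T, hT, hmem⟩ := ih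
    induction e with
    | _ a b =>
      refine ⟨insert a (insert b T), ?_, ?_⟩
      · have h1 := Finset.card_insert_le a (insert b T)
        have h2 := Finset.card_insert_le b T
        have h3 : (insert s(a,b) S').card = S'.card + 1 := Finset.card_insert_of_notMem hnotmem
        omega
      · intro f hf
        rcases Finset.mem_insert.mp hf with h | h
        · subst h
          rw [Finset.mk_mem_sym2_iff]
          simp
        · exact Finset.sym2_mono
            (by intro x hx; simp [Finset.mem_insert, hx] : T ⊆ insert a (insert b T)) (hmem f h)

lemma abs_le_half_sq_add_one (x : ℝ) : |x| ≤ (x^2+1)/2 := by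
  nlinarith [sq_abs x, sq_nonneg (|x| - 1)]

lemma case1_final (ζ t1 t2 A2 p1 p2 : ℝ) (hζpos : 0 < ζ) (hζub : ζ ≤ 1/10^10)
    (ht1 : t1 ≤ 1.36*ζ) (ht2 : t2 ≤ 0.00627*ζ) (hA2 : 0.0427 ≤ A2)
    (hp1 : 0 ≤ p1) (hp2 : 0 ≤ p2) :
    t1 + t2 < (1-ζ)*A2 + p1 + p2 := by
  nlinarith

lemma deltaCover (ζ c δ Nr κr Δ : ℝ) (hζ : 0 < ζ) (hζ2 : ζ ≤ 1/2) (hδ : 0 < δ)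
    (hN : 0 < Nr) (hc0 : 0 ≤ c) (hcub : c*Nr ≤ ζ) (hδκ : δ^2*(4*κr) = 1) (hκ : 0 < κr) :
    c*((5/(4*δ))*max 0 Δ) ≤ (1-ζ)*Δ^2 + c*(15*ζ*κr/Nr) := by
  have hrhs2 : 0 ≤ c*(15*ζ*κr/Nr) := by positivity
  have hrhs1 : 0 ≤ (1-ζ)*Δ^2 := mul_nonneg (by linarith) (sq_nonneg _)
  rcases le_or_gt Δ 0 with hΔ | hΔ
  · rw [max_eq_left hΔ]
    have : c*((5/(4*δ))*0) = 0 := by ring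
    linarith
  rw [max_eq_right hΔ.le]
  rcases le_or_gt Δ (3*ζ/(δ*Nr)) with hsmall | hlarge
  · have key : (5/(4*δ))*Δ ≤ 15*ζ*κr/Nr := by
      rw [show (5/(4*δ))*Δ = (5*Δ)/(4*δ) from by ring,
        div_le_div_iff₀ (by positivity) hN]
      have h1 : Δ*(δ*Nr) ≤ 3*ζ := by
        have h0 := mul_le_mul_of_nonneg_right hsmall (le_of_lt (mul_pos hδ hN))
        rwa [div_mul_cancel₀ _ (ne_of_gt (mul_pos hδ hN))] at h0
      have h2 : (5*Δ)*Nr*δ ≤ 15*ζ := by nlinarith [h1]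
      have h3 : (15*ζ*κr)*(4*δ)*δ = 15*ζ := by linear_combination (15*ζ)*hδκ
      have h4 : (5*Δ)*Nr*δ ≤ (15*ζ*κr)*(4*δ)*δ := by linarith
      exact le_of_mul_le_mul_right h4 hδ
    have := mul_le_mul_of_nonneg_left key hc0
    linarith
  · have hcN : c ≤ ζ/Nr := (le_div_iff₀ hN).mpr hcub
    have hterm : 0 ≤ (5/(4*δ))*Δ := by positivity
    have h1 : c*((5/(4*δ))*Δ) ≤ (ζ/Nr)*((5/(4*δ))*Δ) := mul_le_mul_of_nonneg_right hcN hterm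
    have h2 : (ζ/Nr)*((5/(4*δ))*Δ) = (5*ζ*Δ)/(4*δ*Nr) := by
      field_simp
    have h3 : (5*ζ*Δ)/(4*δ*Nr) ≤ (1-ζ)*Δ^2 := by
      rw [div_le_iff₀ (by positivity)]
      have hq : 3*ζ ≤ Δ*(δ*Nr) := by
        have h0 := mul_le_mul_of_nonneg_right hlarge.le (le_of_lt (mul_pos hδ hN))
        rwa [div_mul_cancel₀ _ (ne_of_gt (mul_pos hδ hN))] at h0
      have hx : 0 ≤ Δ^2*(δ*Nr) := by positivity
      have h30 : (1/2)*(Δ^2*(δ*Nr)) ≤ (1-ζ)*(Δ^2*(δ*Nr)) :=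
        mul_le_mul_of_nonneg_right (by linarith) hx
      have h31 := mul_le_mul_of_nonneg_left hq hΔ.le
      have hζΔ : 0 ≤ ζ*Δ := mul_nonneg hζ.le hΔ.le
      nlinarith [h30, h31, hζΔ]
    linarith

lemma case2_final (ζ u dd r2 : ℝ) (hζdef : ζ = 1/(10^10*dd^2)) (hd1 : 1 ≤ dd)
    (hu : 700/dd^2 ≤ u) (hupos : 0 < u) (hr2lb : 1.414 ≤ r2) (hr2ub : r2 ≤ 1.415)
    (t15 : ℝ) (ht15 : t15 ≤ 0.015*ζ) :
    t15 + 0.00053*u < u/(4*r2) := by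
  have hdd : (0:ℝ) < dd := by linarith
  have hdd2 : (1:ℝ) ≤ dd^2 := by nlinarith
  have h2 : u*0.1766 ≤ u/(4*r2) := by
    rw [le_div_iff₀ (by linarith : (0:ℝ) < 4*r2)]
    have hc : 0.1766*(4*r2) ≤ 1 := by linarith
    calc u*0.1766*(4*r2) = u*(0.1766*(4*r2)) := by ring
      _ ≤ u*1 := mul_le_mul_of_nonneg_left hc hupos.le
      _ = u := by ring
  have h5 : 0.015*ζ < 1/dd^2 := by
    rw [hζdef]
    have he : (1:ℝ)/dd^2 - 0.015*(1/(10^10*dd^2)) = (1 - 0.015/10^10)/dd^2 := by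
      field_simp
    have hpos : 0 < (1 - 0.015/10^10)/dd^2 := by positivity
    linarith
  have h6 : 123/dd^2 ≤ 0.176*u := by
    have := mul_le_mul_of_nonneg_left hu (by norm_num : (0:ℝ) ≤ 0.176)
    calc (123:ℝ)/dd^2 ≤ 0.176*(700/dd^2) := by
          rw [div_le_iff₀ (by positivity)]
          rw [show (0.176:ℝ)*(700/dd^2)*dd^2 = 123.2*(dd^2/dd^2) from by ring]
          rw [div_self (by positivity)]
          norm_num
      _ ≤ 0.176*u := this
  have h7 : (1:ℝ)/dd^2 ≤ 123/dd^2 := by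
    gcongr
    norm_num
  linarith

end Helpers
set_option maxHeartbeats 8000000 in
/-- Soundness of the Densest κ-Subgraph → bounded 1-ReLU training
reduction: if every set of at most `1000κ` vertices induces fewer than `ℓ/1000`
edges, then every weight vector of norm at most 1 has loss more than `OPT + ε`. -/
theorem dks_reduction_soundness
    (V : Type*) [Fintype V] [DecidableEq V]
    (G : SimpleGraph V) [DecidableRel G.Adj]
    (d κ : ℕ) (ℓ : ℝ) (N M : ℕ)
    (hN : N = Fintype.card V) (hM : M = G.edgeFinset.card)
    (hN1 : 1 ≤ N) (hM1 : 1 ≤ M) (hd : 1 ≤ d)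
    (hdeg : ∀ v : V, G.degree v ≤ d)
    (hMN : (N : ℝ) / 5 ≤ (M : ℝ))
    (hκ2 : 2 ≤ κ) (hκN : κ ≤ N)
    (hℓlo : (κ : ℝ) / 3 ≤ ℓ) (hℓhi : ℓ ≤ (M : ℝ))
    (hsound : ∀ T : Finset V, T.card ≤ 1000 * κ →
      ((G.edgeFinset ∩ T.sym2).card : ℝ) < ℓ / 1000) :
    let δ : ℝ := 1 / (2 * Real.sqrt κ)
    let γ : ℝ := 1 / (1000 * (d : ℝ))
    let ζ : ℝ := 1 / (10 ^ 10 * (d : ℝ) ^ 2)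
    let OPT : ℝ := (1 - γ) * ζ * (1 - (κ : ℝ) * δ / (Real.sqrt 2 * N) + (κ : ℝ) * δ ^ 2 / (8 * N))
      + γ * ζ * (1 - ℓ * δ / (2 * Real.sqrt 2 * M) + ℓ * δ ^ 2 / (32 * M))
    let ε : ℝ := γ * ζ * ℓ * δ / (4 * Real.sqrt 2 * M)
      - (1 - γ) * ζ * (κ : ℝ) * δ ^ 2 / (8 * N) - γ * ζ * ℓ * δ ^ 2 / (32 * M)
    ∀ (w : V → ℝ) (ws : ℝ), (∑ v : V, (w v) ^ 2) + ws ^ 2 ≤ 1 →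
      (1 - ζ) * (1 / Real.sqrt 2 - max 0 ws) ^ 2
        + ((1 - γ) * ζ / N) * ∑ v : V, (1 - (1 / 2) * max 0 (w v - δ * ws)) ^ 2
        + (γ * ζ / M) * ∑ e ∈ G.edgeFinset,
            Sym2.lift ⟨fun u v => (1 - (1 / 2) * max 0 (w u + w v - 3.5 * δ * ws)) ^ 2,
              by intro a b; dsimp only; rw [add_comm (w a) (w b)]⟩ e
        > OPT + ε := by
  intro δ γ ζ OPT ε w ws hnorm
  -- basic numeric facts
  have hd1 : (1:ℝ) ≤ (d:ℝ) := by exact_mod_cast hd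
  have hdpos : (0:ℝ) < (d:ℝ) := by linarith
  have hN0 : (0:ℝ) < (N:ℝ) := by exact_mod_cast Nat.lt_of_lt_of_le Nat.zero_lt_one hN1
  have hM0 : (0:ℝ) < (M:ℝ) := by exact_mod_cast Nat.lt_of_lt_of_le Nat.zero_lt_one hM1
  have hκ0 : (0:ℝ) < (κ:ℝ) := by
    have : (0:ℕ) < κ := by omega
    exact_mod_cast this
  have hκ2' : (2:ℝ) ≤ (κ:ℝ) := by exact_mod_cast hκ2
  have hr2sq : Real.sqrt 2 ^ 2 = 2 := Real.sq_sqrt (by norm_num)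
  have hr2pos : 0 < Real.sqrt 2 := Real.sqrt_pos.mpr (by norm_num)
  have hr2lb : 1.414 ≤ Real.sqrt 2 := by
    rw [show (1.414:ℝ) = Real.sqrt (1.414^2) from (Real.sqrt_sq (by norm_num)).symm]
    exact Real.sqrt_le_sqrt (by norm_num)
  have hr2ub : Real.sqrt 2 ≤ 1.415 := by
    rw [show (1.415:ℝ) = Real.sqrt (1.415^2) from (Real.sqrt_sq (by norm_num)).symm]
    exact Real.sqrt_le_sqrt (by norm_num)
  have hrκsq : Real.sqrt κ ^ 2 = (κ:ℝ) := Real.sq_sqrt hκ0.le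
  have hrκpos : 0 < Real.sqrt κ := Real.sqrt_pos.mpr hκ0
  have hrκlb : Real.sqrt 2 ≤ Real.sqrt κ := Real.sqrt_le_sqrt hκ2'
  have hδdef : δ = 1 / (2 * Real.sqrt κ) := rfl
  have hδpos : 0 < δ := by rw [hδdef]; positivity
  have hδub : δ ≤ 0.36 := by
    rw [hδdef, div_le_iff₀ (by positivity)]
    linarith
  have hκδ : (κ:ℝ) * δ = Real.sqrt κ / 2 := by
    rw [hδdef]
    field_simp
    linear_combination (-1:ℝ) * hrκsq
  have hinvδ : 1 / (4 * δ) = (κ:ℝ) * δ := by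
    rw [hκδ, hδdef]
    field_simp
    ring
  have hδsq : δ^2 = 1 / (4 * (κ:ℝ)) := by
    rw [hδdef, div_pow, one_pow, mul_pow, hrκsq]
    norm_num
  have hγdef : γ = 1 / (1000 * (d:ℝ)) := rfl
  have hγpos : 0 < γ := by rw [hγdef]; positivity
  have hγub : γ ≤ 1/1000 := by
    rw [hγdef, div_le_div_iff₀ (by positivity) (by norm_num)]
    linarith
  have hζdef : ζ = 1 / (10 ^ 10 * (d:ℝ)^2) := rfl
  have hζpos : 0 < ζ := by rw [hζdef]; positivity
  have hd2 : (1:ℝ) ≤ (d:ℝ)^2 := by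
    have := mul_le_mul hd1 hd1 (by norm_num) hdpos.le
    calc (1:ℝ) = 1*1 := by norm_num
      _ ≤ (d:ℝ)*(d:ℝ) := this
      _ = (d:ℝ)^2 := by ring
  have hζub : ζ ≤ 1/10^10 := by
    rw [hζdef, div_le_div_iff₀ (by positivity) (by norm_num)]
    linarith
  have hsum0 : 0 ≤ ∑ v : V, w v ^ 2 := Finset.sum_nonneg (fun v _ => sq_nonneg (w v))
  have hsqws : ws^2 ≤ 1 := by linarith
  have hws1 : ws ≤ 1 := by linarith [sq_nonneg (ws - 1)]
  have hwsm1 : -1 ≤ ws := by linarith [sq_nonneg (ws + 1)]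
  -- handshake: 2M ≤ Nd
  have hNd : 2 * M ≤ N * d := by
    have h1 : ∑ v : V, G.degree v = 2 * G.edgeFinset.card := G.sum_degrees_eq_twice_card_edges
    have h2 : ∑ v : V, G.degree v ≤ ∑ _v : V, d := Finset.sum_le_sum (fun v _ => hdeg v)
    simp only [Finset.sum_const, Finset.card_univ, smul_eq_mul] at h2
    rw [hM, hN]
    omega
  -- N > 1000 κ
  have hNκ : 1000 * κ < N := by
    by_contra hcon
    push_neg at hcon
    have huniv : (Finset.univ : Finset V).card ≤ 1000 * κ := by
      rw [Finset.card_univ, ← hN]; exact hcon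
    have h2 := hsound Finset.univ huniv
    have h3 : G.edgeFinset ∩ (Finset.univ : Finset V).sym2 = G.edgeFinset := by
      rw [Finset.sym2_univ, Finset.inter_univ]
    rw [h3, ← hM] at h2
    have : (1:ℝ) ≤ (M:ℝ) := by exact_mod_cast hM1
    linarith
  have hκN' : (κ:ℝ) / (N:ℝ) ≤ 1/1000 := by
    rw [div_le_div_iff₀ hN0 (by norm_num)]
    have : (1000:ℝ) * κ ≤ (N:ℝ) := by exact_mod_cast hNκ.le
    linarith
  -- ℓ ≥ 500000 κ
  have hℓ5 : 500000 * (κ:ℝ) ≤ ℓ := by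
    rcases le_or_gt (500 * κ) M with hc | hc
    · obtain ⟨S, hSsub, hScard⟩ := Finset.exists_subset_card_eq (by rw [← hM]; exact hc :
        500 * κ ≤ G.edgeFinset.card)
      obtain ⟨T, hTcard, hTmem⟩ := edge_cover S
      have hT1000 : T.card ≤ 1000 * κ := by omega
      have h2 := hsound T hT1000
      have hSsub2 : S ⊆ G.edgeFinset ∩ T.sym2 :=
        Finset.subset_inter hSsub (fun e he => hTmem e he)
      have h3 : (500 * κ : ℕ) ≤ (G.edgeFinset ∩ T.sym2).card := by
        rw [← hScard]; exact Finset.card_le_card hSsub2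
      have h4 : ((500 * κ : ℕ):ℝ) ≤ ((G.edgeFinset ∩ T.sym2).card : ℝ) := by exact_mod_cast h3
      push_cast at h4
      linarith
    · exfalso
      obtain ⟨S, hSsub, hScard⟩ := Finset.exists_subset_card_eq (le_refl G.edgeFinset.card)
      obtain ⟨T, hTcard, hTmem⟩ := edge_cover S
      have hT1000 : T.card ≤ 1000 * κ := by
        rw [hScard] at hTcard
        omega
      have h2 := hsound T hT1000
      have hSsub2 : S ⊆ G.edgeFinset ∩ T.sym2 :=
        Finset.subset_inter hSsub (fun e he => hTmem e he)
      have h3 : M ≤ (G.edgeFinset ∩ T.sym2).card := by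
        rw [hM, ← hScard]; exact Finset.card_le_card hSsub2
      have h4 : (M:ℝ) ≤ ((G.edgeFinset ∩ T.sym2).card : ℝ) := by exact_mod_cast h3
      have : (1:ℝ) ≤ (M:ℝ) := by exact_mod_cast hM1
      linarith
  have hℓpos : 0 < ℓ := by linarith
  -- edge-term function
  set eF : Sym2 V → ℝ := Sym2.lift ⟨fun u v => max 0 (w u + w v - 3.5 * δ * ws),
    by intro a b; dsimp only; rw [add_comm (w a) (w b)]⟩ with heF
  -- rewrite the vertex sum
  have hVsum : ∑ v : V, (1 - (1 / 2) * max 0 (w v - δ * ws)) ^ 2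
      = (N:ℝ) - ∑ v : V, (max 0 (w v - δ * ws) - (max 0 (w v - δ * ws))^2/4) := by
    have hper : ∀ v ∈ Finset.univ, (1 - (1 / 2) * max 0 (w v - δ * ws)) ^ 2
        = 1 - (max 0 (w v - δ * ws) - (max 0 (w v - δ * ws))^2/4) := by
      intro v _; ring
    rw [Finset.sum_congr rfl hper, Finset.sum_sub_distrib, Finset.sum_const, Finset.card_univ]
    rw [hN]
    simp
  -- rewrite the edge sum
  have hEsum : ∑ e ∈ G.edgeFinset,
      Sym2.lift ⟨fun u v => (1 - (1 / 2) * max 0 (w u + w v - 3.5 * δ * ws)) ^ 2,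
        by intro a b; dsimp only; rw [add_comm (w a) (w b)]⟩ e
      = (M:ℝ) - ∑ e ∈ G.edgeFinset, (eF e - (eF e)^2/4) := by
    have hper : ∀ e ∈ G.edgeFinset,
        Sym2.lift ⟨fun u v => (1 - (1 / 2) * max 0 (w u + w v - 3.5 * δ * ws)) ^ 2,
          by intro a b; dsimp only; rw [add_comm (w a) (w b)]⟩ e
        = 1 - (eF e - (eF e)^2/4) := by
      intro e _
      induction e with
      | _ a b =>
        rw [heF, Sym2.lift_mk, Sym2.lift_mk]
        ring
    rw [Finset.sum_congr rfl hper, Finset.sum_sub_distrib, Finset.sum_const, ← hM]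
    simp
  rw [hVsum, hEsum]
  set X := ∑ v : V, (max 0 (w v - δ * ws) - (max 0 (w v - δ * ws))^2/4) with hX
  set Y := ∑ e ∈ G.edgeFinset, (eF e - (eF e)^2/4) with hY
  have hNne : (N:ℝ) ≠ 0 := ne_of_gt hN0
  have hMne : (M:ℝ) ≠ 0 := ne_of_gt hM0
  have hr2ne : Real.sqrt 2 ≠ 0 := ne_of_gt hr2pos
  have hOPTdef : OPT = (1 - γ) * ζ * (1 - (κ : ℝ) * δ / (Real.sqrt 2 * N) + (κ : ℝ) * δ ^ 2 / (8 * N))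
      + γ * ζ * (1 - ℓ * δ / (2 * Real.sqrt 2 * M) + ℓ * δ ^ 2 / (32 * M)) := rfl
  have hεdef : ε = γ * ζ * ℓ * δ / (4 * Real.sqrt 2 * M)
      - (1 - γ) * ζ * (κ : ℝ) * δ ^ 2 / (8 * N) - γ * ζ * ℓ * δ ^ 2 / (32 * M) := rfl
  have hOPTε : OPT + ε = (1-γ)*ζ + γ*ζ - ((1-γ)*ζ/N)*((κ:ℝ)*δ/Real.sqrt 2)
      - (γ*ζ/M)*(ℓ*δ/(4*Real.sqrt 2)) := by
    rw [hOPTdef, hεdef]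
    field_simp
    ring
  have hId1 : ((1-γ)*ζ/(N:ℝ))*((N:ℝ) - X) = (1-γ)*ζ - ((1-γ)*ζ/N)*X := by
    field_simp
  have hId2 : (γ*ζ/(M:ℝ))*((M:ℝ) - Y) = γ*ζ - (γ*ζ/M)*Y := by
    field_simp
  rw [gt_iff_lt, hOPTε, hId1, hId2]
  have KEY : ((1-γ)*ζ/N)*X + (γ*ζ/M)*Y < (1-ζ)*(1/Real.sqrt 2 - max 0 ws)^2
      + ((1-γ)*ζ/N)*((κ:ℝ)*δ/Real.sqrt 2) + (γ*ζ/M)*(ℓ*δ/(4*Real.sqrt 2)) := by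
    have h1γ : (0.999:ℝ) ≤ 1 - γ := by linarith
    have h1γpos : (0:ℝ) < 1 - γ := by linarith
    set β := γ * (N:ℝ) / ((1-γ) * M) with hβdef
    have hβpos : 0 < β := by rw [hβdef]; positivity
    have hγd : γ*(d:ℝ) = 1/1000 := by rw [hγdef]; field_simp
    have hcβ : γ*ζ/M = ((1-γ)*ζ/N)*β := by rw [hβdef]; field_simp
    have hNM : (N:ℝ) ≤ 5*M := by linarith
    have hNd' : 2*(M:ℝ) ≤ (N:ℝ)*(d:ℝ) := by exact_mod_cast hNd
    have hβd : β*(d:ℝ) ≤ 0.005006 := by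
      have hrw : β*(d:ℝ) = (γ*(d:ℝ))*(N:ℝ)/((1-γ)*M) := by rw [hβdef]; ring
      rw [hrw, hγd, div_le_iff₀ (by positivity)]
      have hm : 0.999*(M:ℝ) ≤ (1-γ)*(M:ℝ) := mul_le_mul_of_nonneg_right h1γ hM0.le
      linarith
    have hβlb : 1/(500*(d:ℝ)^2) ≤ β := by
      rw [hβdef, div_le_div_iff₀ (by positivity) (by positivity)]
      have hid : γ*(N:ℝ)*(500*(d:ℝ)^2) = (N:ℝ)*(d:ℝ)/2 := by
        rw [hγdef]; field_simp; ring
      have hgm : 0 ≤ γ*(M:ℝ) := by positivity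
      rw [hid]
      linarith [hNd', hgm]
    have hcpos : (0:ℝ) < (1-γ)*ζ/N := by positivity
    rcases le_or_gt ws (1/2) with hcase | hcase
    · -- CASE 1 : ws small, the first loss term dominates everything
      have hmaxle : max 0 ws ≤ 1/2 := max_le (by norm_num) hcase
      have hmax0 : 0 ≤ max 0 ws := le_max_left _ _
      have hA2 : (0.0427:ℝ) ≤ (1/Real.sqrt 2 - max 0 ws)^2 := by
        have h1 : (0.7067:ℝ) ≤ 1/Real.sqrt 2 := by
          rw [le_div_iff₀ hr2pos]
          linarith
        have h2 : (0.2067:ℝ) ≤ 1/Real.sqrt 2 - max 0 ws := by linarith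
        have h3 := pow_le_pow_left₀ (by norm_num : (0:ℝ) ≤ 0.2067) h2 2
        norm_num at h3 ⊢
        linarith
      have habs : ∀ v : V, |w v| ≤ (w v^2 + 1)/2 := fun v => abs_le_half_sq_add_one (w v)
      have hsumabs : ∑ v : V, |w v| ≤ (N:ℝ) := by
        calc ∑ v : V, |w v| ≤ ∑ v : V, (w v^2 + 1)/2 := Finset.sum_le_sum (fun v _ => habs v)
          _ = (∑ v : V, w v^2)/2 + (N:ℝ)/2 := by
              rw [← Finset.sum_div, Finset.sum_add_distrib, Finset.sum_const, Finset.card_univ, ← hN]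
              push_cast; ring
          _ ≤ (N:ℝ) := by
              have hNge : (1:ℝ) ≤ (N:ℝ) := by exact_mod_cast hN1
              linarith [sq_nonneg ws]
      have hXb : X ≤ 1.36*(N:ℝ) := by
        rw [hX]
        have hper : ∀ v ∈ Finset.univ, max 0 (w v - δ*ws) - (max 0 (w v - δ*ws))^2/4
            ≤ |w v| + δ := by
          intro v _
          have h1 : max 0 (w v - δ*ws) ≤ |w v| + δ := by
            apply max_le (by positivity)
            have hp : 0 ≤ δ*(1+ws) := mul_nonneg hδpos.le (by linarith)
            have hp2 := le_abs_self (w v)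
            linarith [hp, hp2]
          linarith [sq_nonneg (max 0 (w v - δ*ws))]
        calc ∑ v : V, (max 0 (w v - δ * ws) - (max 0 (w v - δ * ws))^2/4)
            ≤ ∑ v : V, (|w v| + δ) := Finset.sum_le_sum hper
          _ = (∑ v : V, |w v|) + (N:ℝ)*δ := by
              rw [Finset.sum_add_distrib, Finset.sum_const, Finset.card_univ, ← hN]
              push_cast; ring
          _ ≤ 1.36*(N:ℝ) := by
              have : (N:ℝ)*δ ≤ (N:ℝ)*0.36 := mul_le_mul_of_nonneg_left hδub hN0.le
              linarith
      have hYb : Y ≤ (d:ℝ)*(N:ℝ) + 3.5*δ*(M:ℝ) := by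
        rw [hY]
        have hstep1 : ∀ e ∈ G.edgeFinset, eF e - (eF e)^2/4
            ≤ Sym2.lift ⟨fun u v => |w u| + |w v|, by intro a b; dsimp only; ring⟩ e + 3.5*δ := by
          intro e he
          induction e with
          | _ a b =>
            rw [heF, Sym2.lift_mk, Sym2.lift_mk]
            have h1 : max 0 (w a + w b - 3.5*δ*ws) ≤ |w a| + |w b| + 3.5*δ := by
              apply max_le (by positivity)
              have hp : 0 ≤ δ*(1+ws) := mul_nonneg hδpos.le (by linarith)
              have hpa := le_abs_self (w a)
              have hpb := le_abs_self (w b)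
              linarith [hp, hpa, hpb]
            linarith [sq_nonneg (max 0 (w a + w b - 3.5*δ*ws))]
        calc ∑ e ∈ G.edgeFinset, (eF e - (eF e)^2/4)
            ≤ ∑ e ∈ G.edgeFinset,
              (Sym2.lift ⟨fun u v => |w u| + |w v|, by intro a b; dsimp only; ring⟩ e + 3.5*δ) :=
              Finset.sum_le_sum hstep1
          _ = (∑ e ∈ G.edgeFinset,
              Sym2.lift ⟨fun u v => |w u| + |w v|, by intro a b; dsimp only; ring⟩ e) + (M:ℝ)*(3.5*δ) := by
              rw [Finset.sum_add_distrib, Finset.sum_const, ← hM]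
              push_cast; ring
          _ ≤ (d:ℝ)*(∑ v : V, |w v|) + (M:ℝ)*(3.5*δ) := by
              have := hs_lemma G d hdeg (fun v => |w v|) (fun v => abs_nonneg (w v))
                (Sym2.lift ⟨fun u v => |w u| + |w v|, by intro a b; dsimp only; ring⟩)
                (fun a b => by rw [Sym2.lift_mk])
              linarith
          _ ≤ (d:ℝ)*(N:ℝ) + 3.5*δ*(M:ℝ) := by
              have : (d:ℝ)*(∑ v : V, |w v|) ≤ (d:ℝ)*(N:ℝ) :=
                mul_le_mul_of_nonneg_left hsumabs (by positivity)
              linarith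
      have hterm1 : ((1-γ)*ζ/N)*X ≤ 1.36*ζ := by
        have h1 : ((1-γ)*ζ/N)*X ≤ ((1-γ)*ζ/N)*(1.36*N) := mul_le_mul_of_nonneg_left hXb hcpos.le
        have h2 : ((1-γ)*ζ/N)*(1.36*(N:ℝ)) = 1.36*(1-γ)*ζ := by field_simp
        have h3 : 0 ≤ γ*ζ := mul_nonneg hγpos.le hζpos.le
        have h4 : 1.36*(1-γ)*ζ = 1.36*ζ - 1.36*(γ*ζ) := by ring
        linarith
      have hterm2 : (γ*ζ/M)*Y ≤ 0.00627*ζ := by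
        have h1 : (γ*ζ/M)*Y ≤ (γ*ζ/M)*((d:ℝ)*(N:ℝ) + 3.5*δ*(M:ℝ)) :=
          mul_le_mul_of_nonneg_left hYb (by positivity)
        have h2 : (γ*ζ/M)*((d:ℝ)*(N:ℝ) + 3.5*δ*(M:ℝ))
            = (γ*(d:ℝ))*ζ*((N:ℝ)/(M:ℝ)) + 3.5*γ*ζ*δ := by field_simp
        have h3 : (N:ℝ)/(M:ℝ) ≤ 5 := by rw [div_le_iff₀ hM0]; linarith
        have h4 : (γ*(d:ℝ))*ζ*((N:ℝ)/(M:ℝ)) ≤ (1/1000)*ζ*5 := by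
          rw [hγd]
          exact mul_le_mul_of_nonneg_left h3 (by positivity)
        have hγδ : γ*δ ≤ 0.00036 := by
          calc γ*δ ≤ (1/1000)*δ := mul_le_mul_of_nonneg_right hγub hδpos.le
            _ ≤ (1/1000)*0.36 := by linarith
            _ = 0.00036 := by norm_num
        have h5 : 3.5*γ*ζ*δ ≤ 3.5*ζ*0.00036 := by
          have h6 : 3.5*γ*ζ*δ = (3.5*ζ)*(γ*δ) := by ring
          rw [h6]
          exact mul_le_mul_of_nonneg_left hγδ (by positivity)
        linarith
      have hpos1 : 0 ≤ ((1-γ)*ζ/N)*((κ:ℝ)*δ/Real.sqrt 2) := by positivity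
      have hpos2 : 0 ≤ (γ*ζ/M)*(ℓ*δ/(4*Real.sqrt 2)) := by positivity
      exact case1_final ζ _ _ _ _ _ hζpos hζub hterm1 hterm2 hA2 hpos1 hpos2
    · -- CASE 2 : ws close to 1/√2
      have hwspos : (0:ℝ) < ws := by linarith
      have hmaxws : max 0 ws = ws := max_eq_right hwspos.le
      have htpos : 0 < δ*ws := mul_pos hδpos hwspos
      have htled : δ*ws ≤ δ := by
        have h0 := mul_le_mul_of_nonneg_left hws1 hδpos.le
        rw [mul_one] at h0
        exact h0
      have hW1 : ∑ v : V, w v^2 ≤ 1 - ws^2 := by linarith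
      have hW34 : ∑ v : V, w v^2 ≤ 3/4 := by
        have h1 : (1/2:ℝ)*(1/2) ≤ ws*ws := mul_le_mul hcase.le hcase.le (by norm_num) hwspos.le
        have h2 : ws*ws = ws^2 := by ring
        linarith
      -- the heavy vertex set H
      set H := Finset.univ.filter (fun v => 1.2*(δ*ws) ≤ w v) with hHdef
      have hHcard : H.card ≤ 1000*κ := by
        have h1 : ∀ v ∈ H, (0.09/(κ:ℝ)) ≤ w v^2 := by
          intro v hv
          have h2 : 1.2*(δ*ws) ≤ w v := (Finset.mem_filter.mp hv).2
          have h3 : (0:ℝ) ≤ 1.2*(δ*ws) := by positivity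
          have h4 : (1.2*(δ*ws))^2 ≤ (w v)^2 := pow_le_pow_left₀ h3 h2 2
          have h5 : (1.2*(δ/2))^2 ≤ (1.2*(δ*ws))^2 := by
            apply pow_le_pow_left₀ (by positivity)
            have h0 := mul_le_mul_of_nonneg_left hcase.le hδpos.le
            linarith
          have h6 : (1.2*(δ/2))^2 = 0.36*δ^2 := by ring
          have h7 : 0.36*δ^2 = 0.09/(κ:ℝ) := by rw [hδsq]; ring
          linarith
        have h8 : (H.card:ℝ)*(0.09/(κ:ℝ)) ≤ ∑ v ∈ H, w v^2 := by
          calc (H.card:ℝ)*(0.09/(κ:ℝ)) = ∑ _v ∈ H, (0.09/(κ:ℝ)) := by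
                rw [Finset.sum_const, nsmul_eq_mul]
            _ ≤ ∑ v ∈ H, w v^2 := Finset.sum_le_sum h1
        have h9 : ∑ v ∈ H, w v^2 ≤ ∑ v : V, w v^2 :=
          Finset.sum_le_sum_of_subset_of_nonneg (Finset.subset_univ H) (fun v _ _ => sq_nonneg _)
        have h10 : (H.card:ℝ) ≤ 1000*(κ:ℝ) := by
          have h11 : (H.card:ℝ)*(0.09/(κ:ℝ)) ≤ 3/4 := by linarith
          have h12 := mul_le_mul_of_nonneg_right h11 hκ0.le
          have h13 : (H.card:ℝ)*(0.09/(κ:ℝ))*(κ:ℝ) = 0.09*(H.card:ℝ) := by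
            field_simp
          rw [h13] at h12
          linarith
        exact_mod_cast h10
      have hcard2 : (((G.edgeFinset.filter (fun e => e ∈ H.sym2))).card : ℝ) < ℓ/1000 := by
        have h0 : G.edgeFinset.filter (fun e => e ∈ H.sym2) = G.edgeFinset ∩ H.sym2 :=
          Finset.filter_mem_eq_inter
        rw [h0]
        exact hsound H hHcard
      -- auxiliary lifted functions
      set zf : Sym2 V → ℝ := Sym2.lift ⟨fun u v => max 0 (w u - 2*(δ*ws)) + max 0 (w v - 2*(δ*ws)),
        by intro a b; dsimp only; ring⟩ with hzf
      set z2f : Sym2 V → ℝ := Sym2.lift ⟨fun u v => (max 0 (w u - 2*(δ*ws)))^2 + (max 0 (w v - 2*(δ*ws)))^2,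
        by intro a b; dsimp only; ring⟩ with hz2f
      set Pf : Sym2 V → ℝ := Sym2.lift ⟨fun u v => max 0 (w u - 2.3*(δ*ws)) + max 0 (w v - 2.3*(δ*ws)),
        by intro a b; dsimp only; ring⟩ with hPf
      -- split the edge sum
      have hsplitY : Y = (∑ e ∈ G.edgeFinset.filter (fun e => e ∈ H.sym2), (eF e - eF e^2/4))
          + ∑ e ∈ G.edgeFinset.filter (fun e => ¬ e ∈ H.sym2), (eF e - eF e^2/4) := by
        rw [hY]
        exact (Finset.sum_filter_add_sum_filter_not _ _ _).symm
      -- heavy edges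
      have hEH : ∑ e ∈ G.edgeFinset.filter (fun e => e ∈ H.sym2), (eF e - eF e^2/4)
          ≤ (∑ e ∈ G.edgeFinset.filter (fun e => e ∈ H.sym2), zf e)
            + (((G.edgeFinset.filter (fun e => e ∈ H.sym2))).card : ℝ)*(0.5*(δ*ws)) := by
        have hper : ∀ e ∈ G.edgeFinset.filter (fun e => e ∈ H.sym2),
            eF e - eF e^2/4 ≤ zf e + 0.5*(δ*ws) := by
          intro e _
          induction e with
          | _ a b =>
            rw [heF, Sym2.lift_mk, hzf, Sym2.lift_mk]
            dsimp only
            rw [show w a + w b - 3.5 * δ * ws = w a + w b - 3.5*(δ*ws) from by ring]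
            have h1 := edgeHeavy (δ*ws) (w a) (w b) htpos
            have h2 := sq_nonneg (max 0 (w a + w b - 3.5*(δ*ws)))
            linarith
        calc ∑ e ∈ G.edgeFinset.filter (fun e => e ∈ H.sym2), (eF e - eF e^2/4)
            ≤ ∑ e ∈ G.edgeFinset.filter (fun e => e ∈ H.sym2), (zf e + 0.5*(δ*ws)) :=
              Finset.sum_le_sum hper
          _ = (∑ e ∈ G.edgeFinset.filter (fun e => e ∈ H.sym2), zf e)
              + (((G.edgeFinset.filter (fun e => e ∈ H.sym2))).card : ℝ)*(0.5*(δ*ws)) := by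
              rw [Finset.sum_add_distrib, Finset.sum_const, nsmul_eq_mul]
      -- z-part of heavy edges via AM-GM
      have hdt : (0:ℝ) < (d:ℝ)*(δ*ws) := mul_pos hdpos htpos
      have hzb : β*(∑ e ∈ G.edgeFinset.filter (fun e => e ∈ H.sym2), zf e)
          ≤ (∑ v : V, (max 0 (w v - 2*(δ*ws)))^2)/(8*(δ*ws))
            + (((G.edgeFinset.filter (fun e => e ∈ H.sym2))).card : ℝ)*(4*β^2*((d:ℝ)*(δ*ws))) := by
        have hper : ∀ e ∈ G.edgeFinset.filter (fun e => e ∈ H.sym2),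
            β*(zf e) ≤ z2f e/(8*((d:ℝ)*(δ*ws))) + 4*β^2*((d:ℝ)*(δ*ws)) := by
          intro e _
          induction e with
          | _ a b =>
            rw [hzf, Sym2.lift_mk, hz2f, Sym2.lift_mk]
            dsimp only
            have h1 := amgm (max 0 (w a - 2*(δ*ws))) ((d:ℝ)*(δ*ws)) β hdt
            have h2 := amgm (max 0 (w b - 2*(δ*ws))) ((d:ℝ)*(δ*ws)) β hdt
            have h3 : (max 0 (w a - 2*(δ*ws)))^2/(8*((d:ℝ)*(δ*ws)))
                + (max 0 (w b - 2*(δ*ws)))^2/(8*((d:ℝ)*(δ*ws)))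
                = ((max 0 (w a - 2*(δ*ws)))^2 + (max 0 (w b - 2*(δ*ws)))^2)/(8*((d:ℝ)*(δ*ws))) := by
              ring
            linarith
        have hstep : β*(∑ e ∈ G.edgeFinset.filter (fun e => e ∈ H.sym2), zf e)
            ≤ (∑ e ∈ G.edgeFinset.filter (fun e => e ∈ H.sym2), z2f e)/(8*((d:ℝ)*(δ*ws)))
              + (((G.edgeFinset.filter (fun e => e ∈ H.sym2))).card : ℝ)*(4*β^2*((d:ℝ)*(δ*ws))) := by
          calc β*(∑ e ∈ G.edgeFinset.filter (fun e => e ∈ H.sym2), zf e)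
              = ∑ e ∈ G.edgeFinset.filter (fun e => e ∈ H.sym2), (β*zf e) := Finset.mul_sum _ _ _
            _ ≤ ∑ e ∈ G.edgeFinset.filter (fun e => e ∈ H.sym2),
                (z2f e/(8*((d:ℝ)*(δ*ws))) + 4*β^2*((d:ℝ)*(δ*ws))) := Finset.sum_le_sum hper
            _ = (∑ e ∈ G.edgeFinset.filter (fun e => e ∈ H.sym2), z2f e)/(8*((d:ℝ)*(δ*ws)))
                + (((G.edgeFinset.filter (fun e => e ∈ H.sym2))).card : ℝ)*(4*β^2*((d:ℝ)*(δ*ws))) := by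
                rw [Finset.sum_add_distrib, Finset.sum_const, nsmul_eq_mul, ← Finset.sum_div]
        have hsub : ∑ e ∈ G.edgeFinset.filter (fun e => e ∈ H.sym2), z2f e
            ≤ ∑ e ∈ G.edgeFinset, z2f e := by
          apply Finset.sum_le_sum_of_subset_of_nonneg (Finset.filter_subset _ _)
          intro e _ _
          induction e with
          | _ a b =>
            rw [hz2f, Sym2.lift_mk]
            positivity
        have hhs : ∑ e ∈ G.edgeFinset, z2f e
            ≤ (d:ℝ)*∑ v : V, (max 0 (w v - 2*(δ*ws)))^2 :=
          hs_lemma G d hdeg (fun v => (max 0 (w v - 2*(δ*ws)))^2) (fun v => sq_nonneg _) z2f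
            (fun a b => by rw [hz2f, Sym2.lift_mk])
        have hdiv : ((d:ℝ)*∑ v : V, (max 0 (w v - 2*(δ*ws)))^2)/(8*((d:ℝ)*(δ*ws)))
            = (∑ v : V, (max 0 (w v - 2*(δ*ws)))^2)/(8*(δ*ws)) := by
          field_simp
        have hmono : (∑ e ∈ G.edgeFinset.filter (fun e => e ∈ H.sym2), z2f e)/(8*((d:ℝ)*(δ*ws)))
            ≤ (∑ v : V, (max 0 (w v - 2*(δ*ws)))^2)/(8*(δ*ws)) := by
          rw [← hdiv]
          gcongr
          exact le_trans hsub hhs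
        linarith
      -- light edges
      have hEL : ∑ e ∈ G.edgeFinset.filter (fun e => ¬ e ∈ H.sym2), (eF e - eF e^2/4)
          ≤ (d:ℝ)*∑ v : V, max 0 (w v - 2.3*(δ*ws)) := by
        have hper : ∀ e ∈ G.edgeFinset.filter (fun e => ¬ e ∈ H.sym2),
            eF e - eF e^2/4 ≤ Pf e := by
          intro e
          induction e with
          | _ a b =>
            intro he
            have hnot : ¬ s(a,b) ∈ H.sym2 := (Finset.mem_filter.mp he).2
            have hlight : w a ≤ 1.2*(δ*ws) ∨ w b ≤ 1.2*(δ*ws) := by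
              by_contra hcon
              push_neg at hcon
              exact hnot (Finset.mk_mem_sym2_iff.mpr
                ⟨Finset.mem_filter.mpr ⟨Finset.mem_univ a, hcon.1.le⟩,
                 Finset.mem_filter.mpr ⟨Finset.mem_univ b, hcon.2.le⟩⟩)
            rw [heF, Sym2.lift_mk, hPf, Sym2.lift_mk]
            dsimp only
            rw [show w a + w b - 3.5 * δ * ws = w a + w b - 3.5*(δ*ws) from by ring]
            have h1 := edgeLight (δ*ws) (w a) (w b) hlight
            have h2 := sq_nonneg (max 0 (w a + w b - 3.5*(δ*ws)))
            linarith
        calc ∑ e ∈ G.edgeFinset.filter (fun e => ¬ e ∈ H.sym2), (eF e - eF e^2/4)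
            ≤ ∑ e ∈ G.edgeFinset.filter (fun e => ¬ e ∈ H.sym2), Pf e := Finset.sum_le_sum hper
          _ ≤ ∑ e ∈ G.edgeFinset, Pf e := by
              apply Finset.sum_le_sum_of_subset_of_nonneg (Finset.filter_subset _ _)
              intro e _ _
              induction e with
              | _ a b =>
                rw [hPf, Sym2.lift_mk]
                positivity
          _ ≤ (d:ℝ)*∑ v : V, max 0 (w v - 2.3*(δ*ws)) :=
              hs_lemma G d hdeg (fun v => max 0 (w v - 2.3*(δ*ws))) (fun v => le_max_left _ _) Pf
                (fun a b => by rw [hPf, Sym2.lift_mk])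
      -- vertex bound
      have hvert : X + (∑ v : V, (max 0 (w v - 2*(δ*ws)))^2)/(8*(δ*ws))
          + (β*(d:ℝ))*(∑ v : V, max 0 (w v - 2.3*(δ*ws)))
          ≤ (∑ v : V, w v^2)/(4*(δ*ws)) := by
        have hper : ∀ v ∈ Finset.univ,
            (max 0 (w v - δ*ws) - (max 0 (w v - δ*ws))^2/4)
              + (max 0 (w v - 2*(δ*ws)))^2/(8*(δ*ws))
              + (β*(d:ℝ))*max 0 (w v - 2.3*(δ*ws)) ≤ (w v)^2/(4*(δ*ws)) := by
          intro v _
          exact vertIneq (δ*ws) (w v) (β*(d:ℝ)) htpos (by positivity) hβd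
        have hsum := Finset.sum_le_sum hper
        have hL : ∑ v : V, ((max 0 (w v - δ*ws) - (max 0 (w v - δ*ws))^2/4)
              + (max 0 (w v - 2*(δ*ws)))^2/(8*(δ*ws))
              + (β*(d:ℝ))*max 0 (w v - 2.3*(δ*ws)))
            = X + (∑ v : V, (max 0 (w v - 2*(δ*ws)))^2)/(8*(δ*ws))
              + (β*(d:ℝ))*(∑ v : V, max 0 (w v - 2.3*(δ*ws))) := by
          rw [Finset.sum_add_distrib, Finset.sum_add_distrib, ← Finset.sum_div, ← Finset.mul_sum, hX]
        have hR : ∑ v : V, ((w v)^2/(4*(δ*ws))) = (∑ v : V, w v^2)/(4*(δ*ws)) :=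
          (Finset.sum_div _ _ _).symm
        rw [hL, hR] at hsum
        exact hsum
      -- bound for the weighted square sum
      have hWq : (∑ v : V, w v^2)/(4*(δ*ws))
          ≤ (κ:ℝ)*δ/Real.sqrt 2 + (5/(4*δ))*max 0 (1/Real.sqrt 2 - ws) := by
        have hs1 := sLem ws (Real.sqrt 2) hr2sq hr2pos hcase hws1
        have h2 : (∑ v : V, w v^2) ≤ ws*(1/Real.sqrt 2) + 5*ws*max 0 (1/Real.sqrt 2 - ws) := by
          have h0 : ws/Real.sqrt 2 = ws*(1/Real.sqrt 2) := by ring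
          linarith
        have h3 : (∑ v : V, w v^2)/(4*(δ*ws))
            ≤ (ws*(1/Real.sqrt 2) + 5*ws*max 0 (1/Real.sqrt 2 - ws))/(4*(δ*ws)) := by
          gcongr
        have h4 : (ws*(1/Real.sqrt 2) + 5*ws*max 0 (1/Real.sqrt 2 - ws))/(4*(δ*ws))
            = (κ:ℝ)*δ/Real.sqrt 2 + (5/(4*δ))*max 0 (1/Real.sqrt 2 - ws) := by
          rw [← hinvδ]
          field_simp
        linarith
      -- cover the Δ term
      have hζhalf : ζ ≤ 1/2 := le_trans hζub (by norm_num)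
      have hcub : ((1-γ)*ζ/N)*(N:ℝ) ≤ ζ := by
        rw [div_mul_cancel₀ _ hNne]
        have h0 : 0 ≤ γ*ζ := mul_nonneg hγpos.le hζpos.le
        have h1 : (1-γ)*ζ = ζ - γ*ζ := by ring
        linarith
      have hδκ1 : δ^2*(4*(κ:ℝ)) = 1 := by
        rw [hδsq]
        field_simp
      have hΔcov := deltaCover ζ ((1-γ)*ζ/N) δ (N:ℝ) (κ:ℝ) (1/Real.sqrt 2 - ws)
        hζpos hζhalf hδpos hN0 hcpos.le hcub hδκ1 hκ0
      -- numeric final inequality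
      have hℓδ : 350000 ≤ ℓ*δ := by
        have h1 : 500000*(κ:ℝ)*δ ≤ ℓ*δ := mul_le_mul_of_nonneg_right hℓ5 hδpos.le
        have h2 : 500000*((κ:ℝ)*δ) = 250000*Real.sqrt κ := by rw [hκδ]; ring
        have h3 : (1.414:ℝ) ≤ Real.sqrt κ := le_trans hr2lb hrκlb
        have h4 := mul_le_mul_of_nonneg_left h3 (by norm_num : (0:ℝ) ≤ 250000)
        linarith
      have hβℓδpos : 0 < β*(ℓ*δ) := by positivity
      have hu : 700/(d:ℝ)^2 ≤ β*(ℓ*δ) := by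
        have h1 : (1/(500*(d:ℝ)^2))*350000 ≤ β*(ℓ*δ) :=
          mul_le_mul hβlb hℓδ (by norm_num) hβpos.le
        have h2 : (1/(500*(d:ℝ)^2))*350000 = 700/(d:ℝ)^2 := by
          field_simp
          ring
        linarith
      have ht15 : 15*ζ*(κ:ℝ)/(N:ℝ) ≤ 0.015*ζ := by
        have e1 : 15*ζ*(κ:ℝ)/(N:ℝ) = (15*ζ)*((κ:ℝ)/N) := by ring
        rw [e1]
        have h0 := mul_le_mul_of_nonneg_left hκN' (by positivity : (0:ℝ) ≤ 15*ζ)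
        have h1 : (15*ζ)*(1/1000 : ℝ) = 0.015*ζ := by ring
        linarith
      have hfin := case2_final ζ (β*(ℓ*δ)) (d:ℝ) (Real.sqrt 2) hζdef hd1 hu hβℓδpos
        hr2lb hr2ub (15*ζ*(κ:ℝ)/(N:ℝ)) ht15
      -- the slack term
      have hslack1 : 0.5*(δ*ws)*β + 4*β^2*((d:ℝ)*(δ*ws)) ≤ 0.53*(β*δ) := by
        have hβt0 : (0:ℝ) ≤ β*(δ*ws) := by positivity
        have h1 := mul_le_mul_of_nonneg_right hβd hβt0
        have h2 : β*(δ*ws) ≤ β*δ := mul_le_mul_of_nonneg_left htled hβpos.le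
        have hβδ0 : (0:ℝ) ≤ β*δ := by positivity
        linarith [h1, h2, hβδ0]
      -- combine everything
      have hn2pos : (0:ℝ) ≤ (((G.edgeFinset.filter (fun e => e ∈ H.sym2))).card : ℝ) :=
        Nat.cast_nonneg _
      have hslack2 : (((G.edgeFinset.filter (fun e => e ∈ H.sym2))).card : ℝ)
            *(0.5*(δ*ws)) *β
          + (((G.edgeFinset.filter (fun e => e ∈ H.sym2))).card : ℝ)*(4*β^2*((d:ℝ)*(δ*ws)))
          ≤ 0.00053*(β*(ℓ*δ)) := by
        have h0 : (((G.edgeFinset.filter (fun e => e ∈ H.sym2))).card : ℝ)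
              *(0.5*(δ*ws)*β + 4*β^2*((d:ℝ)*(δ*ws)))
            ≤ (ℓ/1000)*(0.53*(β*δ)) := by
          apply mul_le_mul hcard2.le hslack1 (by positivity) (by positivity)
        have h1 : (ℓ/1000)*(0.53*(β*δ)) = 0.00053*(β*(ℓ*δ)) := by ring
        linarith [h0]
      have hXY : X + β*Y ≤ (∑ v : V, w v^2)/(4*(δ*ws)) + 0.00053*(β*(ℓ*δ)) := by
        have hb1 : β*Y = β*(∑ e ∈ G.edgeFinset.filter (fun e => e ∈ H.sym2), (eF e - eF e^2/4))
            + β*(∑ e ∈ G.edgeFinset.filter (fun e => ¬ e ∈ H.sym2), (eF e - eF e^2/4)) := by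
          rw [hsplitY]
          ring
        have hb2 : β*(∑ e ∈ G.edgeFinset.filter (fun e => e ∈ H.sym2), (eF e - eF e^2/4))
            ≤ β*((∑ e ∈ G.edgeFinset.filter (fun e => e ∈ H.sym2), zf e)
              + (((G.edgeFinset.filter (fun e => e ∈ H.sym2))).card : ℝ)*(0.5*(δ*ws))) :=
          mul_le_mul_of_nonneg_left hEH hβpos.le
        have hb3 : β*(∑ e ∈ G.edgeFinset.filter (fun e => ¬ e ∈ H.sym2), (eF e - eF e^2/4))
            ≤ β*((d:ℝ)*∑ v : V, max 0 (w v - 2.3*(δ*ws))) :=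
          mul_le_mul_of_nonneg_left hEL hβpos.le
        have hb4 : β*((d:ℝ)*∑ v : V, max 0 (w v - 2.3*(δ*ws)))
            = (β*(d:ℝ))*(∑ v : V, max 0 (w v - 2.3*(δ*ws))) := by ring
        have hb5 : β*((∑ e ∈ G.edgeFinset.filter (fun e => e ∈ H.sym2), zf e)
              + (((G.edgeFinset.filter (fun e => e ∈ H.sym2))).card : ℝ)*(0.5*(δ*ws)))
            = β*(∑ e ∈ G.edgeFinset.filter (fun e => e ∈ H.sym2), zf e)
              + (((G.edgeFinset.filter (fun e => e ∈ H.sym2))).card : ℝ)*(0.5*(δ*ws))*β := by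
          ring
        linarith [hzb, hvert, hslack2]
      -- final assembly
      rw [hmaxws, hcβ]
      have hk1 : ((1-γ)*ζ/N)*X + ((1-γ)*ζ/N)*β*Y = ((1-γ)*ζ/N)*(X + β*Y) := by ring
      have hk2 : ((1-γ)*ζ/N)*(X + β*Y)
          ≤ ((1-γ)*ζ/N)*((∑ v : V, w v^2)/(4*(δ*ws)) + 0.00053*(β*(ℓ*δ))) :=
        mul_le_mul_of_nonneg_left hXY hcpos.le
      have hk3 : ((1-γ)*ζ/N)*((∑ v : V, w v^2)/(4*(δ*ws)) + 0.00053*(β*(ℓ*δ)))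
          ≤ ((1-γ)*ζ/N)*((κ:ℝ)*δ/Real.sqrt 2 + (5/(4*δ))*max 0 (1/Real.sqrt 2 - ws)
              + 0.00053*(β*(ℓ*δ))) := by
        apply mul_le_mul_of_nonneg_left _ hcpos.le
        linarith
      have hk4 := mul_lt_mul_of_pos_left hfin hcpos
      -- hk4 : c*(15ζκ/N + 0.00053 u) < c*(u/(4√2))
      have hbridge : ((1-γ)*ζ/N)*β*(ℓ*δ/(4*Real.sqrt 2))
          = ((1-γ)*ζ/N)*(β*(ℓ*δ)/(4*Real.sqrt 2)) := by ring
      linarith only [hk1, hk2, hk3, hk4, hΔcov, hbridge]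
  linarith
end

section
/- Let k ≥ 2 and t ≥ 1 be integers, let G = (V,E) be a finite hypergraph with n = |V| ≥ 1 vertices in which every hyperedge e ∈ E satisfies |e| ≤ t, and let χ: V → {1,…,k} be a proper k-coloring of G (i.e., for every e ∈ E there exist i, j ∈ e with χ(i) ≠ χ(j)). For each a ∈ {1,…,k} define w^a ∈ ℝ^V by w^a_i = 1/(t·√(t·n)) if χ(i) = a and w^a_i = −1/√n otherwise. Then: (i) ‖w^a‖₂ ≤ 1 for every a; (ii) for every vertex i ∈ V: Σ_{a=1}^{k} max(0, w^a_i) = 1/(t·√(t·n)); and (iii) for every hyperedge e ∈ E: Σ_{a=1}^{k} max(0, (1/√t)·Σ_{i∈e} w^a_i) = 0. -/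
/-- Completeness of the hypergraph k-coloring → sum-of-k-ReLUs
training reduction: a proper k-coloring yields bounded weight vectors realizing
all vertex and hyperedge samples. -/
theorem coloring_reduction_completeness
    (V : Type*) [Fintype V] [DecidableEq V]
    (k t : ℕ) (hk : 2 ≤ k) (ht : 1 ≤ t)
    (E : Finset (Finset V)) (hE : ∀ e ∈ E, e.card ≤ t)
    (n : ℕ) (hn : n = Fintype.card V) (hn1 : 1 ≤ n)
    (χ : V → Fin k)
    (hproper : ∀ e ∈ E, ∃ i ∈ e, ∃ j ∈ e, χ i ≠ χ j) :
    let w : Fin k → V → ℝ := fun a i =>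
      if χ i = a then 1 / ((t : ℝ) * Real.sqrt ((t : ℝ) * n)) else -1 / Real.sqrt n
    (∀ a : Fin k, Real.sqrt (∑ i : V, (w a i) ^ 2) ≤ 1) ∧
    (∀ i : V, ∑ a : Fin k, max 0 (w a i) = 1 / ((t : ℝ) * Real.sqrt ((t : ℝ) * n))) ∧
    (∀ e ∈ E, ∑ a : Fin k, max 0 ((1 / Real.sqrt t) * ∑ i ∈ e, w a i) = 0) := by
  intro w
  have htR : (1:ℝ) ≤ t := by exact_mod_cast ht
  have hnR : (1:ℝ) ≤ n := by exact_mod_cast hn1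
  have hnpos : (0:ℝ) < n := by linarith
  have htpos : (0:ℝ) < t := by linarith
  have hsn : (0:ℝ) < Real.sqrt n := Real.sqrt_pos.2 hnpos
  have hstn : (0:ℝ) < Real.sqrt ((t:ℝ) * n) := Real.sqrt_pos.2 (by positivity)
  have hsq_tn : Real.sqrt ((t:ℝ)*n) ^ 2 = (t:ℝ)*n := Real.sq_sqrt (by positivity)
  have hsq_n : Real.sqrt (n:ℝ) ^ 2 = (n:ℝ) := Real.sq_sqrt hnpos.le
  set c : ℝ := 1 / ((t : ℝ) * Real.sqrt ((t : ℝ) * n)) with hc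
  have hcpos : 0 < c := by positivity
  -- key bound: t * c ≤ 1 / √n
  have hsn_le : Real.sqrt (n:ℝ) ≤ Real.sqrt ((t:ℝ)*n) := by
    apply Real.sqrt_le_sqrt; nlinarith
  have hkey : (t:ℝ) * c ≤ 1 / Real.sqrt n := by
    rw [hc]
    rw [mul_one_div, div_le_div_iff₀ (by positivity) hsn]
    calc (t:ℝ) * Real.sqrt n ≤ (t:ℝ) * Real.sqrt ((t:ℝ)*n) := by
            exact mul_le_mul_of_nonneg_left hsn_le htpos.le
      _ = 1 * ((t:ℝ) * Real.sqrt ((t:ℝ)*n)) := by ring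
  refine ⟨?_, ?_, ?_⟩
  · -- norm bound
    intro a
    have h1 : ∀ i : V, (w a i)^2 ≤ 1/(n:ℝ) := by
      intro i
      simp only [w]
      split
      · rw [div_pow, one_pow, mul_pow, hsq_tn]
        rw [div_le_div_iff₀ (by positivity) hnpos]
        have ht3 : (1:ℝ) ≤ t^2*t := by nlinarith
        nlinarith [mul_le_mul_of_nonneg_right ht3 hnpos.le]
      · rw [neg_div, neg_sq, div_pow, one_pow, hsq_n]
    calc Real.sqrt (∑ i : V, (w a i)^2)
        ≤ Real.sqrt (∑ _i : V, 1/(n:ℝ)) :=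
          Real.sqrt_le_sqrt (Finset.sum_le_sum fun i _ => h1 i)
      _ = 1 := by
          rw [Finset.sum_const, nsmul_eq_mul, Finset.card_univ, ← hn]
          rw [mul_one_div, div_self (ne_of_gt hnpos), Real.sqrt_one]
  · -- vertex samples
    intro i
    rw [Finset.sum_eq_single (χ i)]
    · simp only [w, if_pos rfl]
      exact max_eq_right hcpos.le
    · intro b _ hb
      simp only [w, if_neg (Ne.symm hb : ¬ χ i = b)]
      rw [max_eq_left]
      rw [neg_div]
      exact neg_nonpos.2 (by positivity)
    · simp
  · -- hyperedge samples
    intro e he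
    apply Finset.sum_eq_zero
    intro a _
    apply max_eq_left
    apply mul_nonpos_of_nonneg_of_nonpos
    · positivity
    -- bound the inner sum
    have hsplit : ∑ i ∈ e, w a i =
        (e.filter (fun i => χ i = a)).card * c
        + (e.filter (fun i => ¬ χ i = a)).card * (-1 / Real.sqrt n) := by
      simp only [w]
      rw [Finset.sum_ite, Finset.sum_const, Finset.sum_const, nsmul_eq_mul, nsmul_eq_mul]
    have hcard1 : (e.filter (fun i => χ i = a)).card ≤ t := by
      calc (e.filter (fun i => χ i = a)).card ≤ e.card := Finset.card_filter_le _ _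
        _ ≤ t := hE e he
    have hcard2 : 1 ≤ (e.filter (fun i => ¬ χ i = a)).card := by
      obtain ⟨i, hi, j, hj, hij⟩ := hproper e he
      rcases ne_or_eq (χ i) a with h | h
      · exact Finset.card_pos.2 ⟨i, Finset.mem_filter.2 ⟨hi, h⟩⟩
      · exact Finset.card_pos.2 ⟨j, Finset.mem_filter.2 ⟨hj, by rw [← h]; exact hij.symm⟩⟩
    rw [hsplit]
    have h1 : ((e.filter (fun i => χ i = a)).card : ℝ) * c ≤ (t:ℝ) * c := by
      apply mul_le_mul_of_nonneg_right _ hcpos.le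
      exact_mod_cast hcard1
    have h2 : ((e.filter (fun i => ¬ χ i = a)).card : ℝ) * (-1 / Real.sqrt n)
        ≤ 1 * (-1 / Real.sqrt n) := by
      apply mul_le_mul_of_nonpos_right
      · exact_mod_cast hcard2
      · rw [neg_div]; exact neg_nonpos.2 (by positivity)
    have h3 : (-1:ℝ)/Real.sqrt n = -(1/Real.sqrt n) := neg_div _ _
    nlinarith [hkey]
end

section
/- Let k ≥ 2 and t ≥ 2 be integers, let G = (V,E) be a finite hypergraph with n = |V| ≥ 1 vertices and M = |E| ≥ 1 hyperedges, where every e ∈ E satisfies 2 ≤ |e| ≤ t. For i ∈ V let deg(i) = |{e ∈ E : i ∈ e}| and let m = Σ_{i∈V} deg(i) + M. Let γ ∈ (0,1] and suppose that every coloring χ: V → {1,…,k} makes at least γ·M hyperedges monochromatic. Then for all w¹,…,w^k ∈ ℝ^V: (1/m)·[ Σ_{i∈V} deg(i)·(1/(t·√(t·n)) − Σ_{a=1}^{k} max(0, w^a_i))² + Σ_{e∈E} (Σ_{a=1}^{k} max(0, (1/√t)·Σ_{i∈e} w^a_i))² ] > γ/(100·k²·t⁵·n). -/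
set_option maxHeartbeats 1000000 in
/-- Soundness of the hypergraph k-coloring → sum-of-k-ReLUs training
reduction: if every k-coloring leaves at least a `γ` fraction of hyperedges
monochromatic, then every sum of k ReLUs incurs average squared training error
more than `γ/(100·k²·t⁵·n)`. -/
theorem coloring_reduction_soundness
    (V : Type*) [Fintype V] [DecidableEq V]
    (k t : ℕ) (hk : 2 ≤ k) (ht : 2 ≤ t)
    (E : Finset (Finset V)) (hcard : ∀ e ∈ E, 2 ≤ e.card ∧ e.card ≤ t)
    (n M : ℕ) (hn : n = Fintype.card V) (hn1 : 1 ≤ n)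
    (hM : M = E.card) (hM1 : 1 ≤ M)
    (deg : V → ℕ) (hdeg : ∀ i : V, deg i = (E.filter (fun e => i ∈ e)).card)
    (m : ℕ) (hm : m = (∑ i : V, deg i) + M)
    (γ : ℝ) (hγ0 : 0 < γ) (hγ1 : γ ≤ 1)
    (hmono : ∀ χ : V → Fin k,
      γ * (M : ℝ) ≤ ((E.filter (fun e => ∀ i ∈ e, ∀ j ∈ e, χ i = χ j)).card : ℝ)) :
    ∀ w : Fin k → V → ℝ,
      (1 / (m : ℝ)) *
        ((∑ i : V, (deg i : ℝ) *
            (1 / ((t : ℝ) * Real.sqrt ((t : ℝ) * n)) - ∑ a : Fin k, max 0 (w a i)) ^ 2)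
          + ∑ e ∈ E, (∑ a : Fin k, max 0 ((1 / Real.sqrt t) * ∑ i ∈ e, w a i)) ^ 2)
        > γ / (100 * (k : ℝ) ^ 2 * (t : ℝ) ^ 5 * (n : ℝ)) := by
  classical
  intro w
  have hkR : (2:ℝ) ≤ (k:ℝ) := by exact_mod_cast hk
  have htR : (2:ℝ) ≤ (t:ℝ) := by exact_mod_cast ht
  have hnR : (1:ℝ) ≤ (n:ℝ) := by exact_mod_cast hn1
  have hMR : (1:ℝ) ≤ (M:ℝ) := by exact_mod_cast hM1
  have hk0 : (0:ℝ) < (k:ℝ) := by linarith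
  have ht0 : (0:ℝ) < (t:ℝ) := by linarith
  have hn0 : (0:ℝ) < (n:ℝ) := by linarith
  have hM0 : (0:ℝ) < (M:ℝ) := by linarith
  have htn0 : (0:ℝ) < (t:ℝ) * (n:ℝ) := by positivity
  have hst : 0 < Real.sqrt ((t:ℝ) * (n:ℝ)) := Real.sqrt_pos.2 htn0
  have hstt : 0 < Real.sqrt (t:ℝ) := Real.sqrt_pos.2 ht0
  set δ : ℝ := 1 / ((t:ℝ) * Real.sqrt ((t:ℝ) * (n:ℝ))) with hδ
  have hδ0 : 0 < δ := div_pos one_pos (mul_pos ht0 hst)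
  have hδsq : δ ^ 2 = 1 / ((t:ℝ)^3 * (n:ℝ)) := by
    rw [hδ, div_pow, one_pow, mul_pow, Real.sq_sqrt htn0.le]
    ring_nf
  set S : V → ℝ := fun i => ∑ a : Fin k, max 0 (w a i) with hSdef
  have hS0 : ∀ i, 0 ≤ S i := fun i => Finset.sum_nonneg (fun a _ => le_max_left 0 _)
  have hkne : (k:ℝ) ≠ 0 := hk0.ne'
  have hgood : ∀ i : V, δ/2 ≤ S i → ∃ a : Fin k, δ/(2*(k:ℝ)) ≤ w a i := by
    intro i hi
    have hex : ∃ a ∈ (Finset.univ : Finset (Fin k)), δ/(2*(k:ℝ)) ≤ max 0 (w a i) := by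
      by_contra hc
      push_neg at hc
      have hne : (Finset.univ : Finset (Fin k)).Nonempty :=
        ⟨⟨0, by omega⟩, Finset.mem_univ _⟩
      have hlt : S i < ∑ _a : Fin k, δ/(2*(k:ℝ)) :=
        Finset.sum_lt_sum_of_nonempty hne (fun a _ => hc a (Finset.mem_univ a))
      have hsumconst : ∑ _a : Fin k, δ/(2*(k:ℝ)) = δ/2 := by
        rw [Finset.sum_const, Finset.card_univ, Fintype.card_fin, nsmul_eq_mul]
        field_simp
      rw [hsumconst] at hlt
      linarith
    obtain ⟨a, _, ha⟩ := hex
    refine ⟨a, ?_⟩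
    rcases le_max_iff.1 ha with h | h
    · exfalso
      have : 0 < δ/(2*(k:ℝ)) := by positivity
      linarith
    · exact h
  set χ : V → Fin k := fun i =>
    if h : ∃ a : Fin k, δ/(2*(k:ℝ)) ≤ w a i then h.choose else ⟨0, by omega⟩ with hχdef
  have hχ : ∀ i : V, δ/2 ≤ S i → δ/(2*(k:ℝ)) ≤ w (χ i) i := by
    intro i hi
    have h := hgood i hi
    simp only [hχdef, dif_pos h]
    exact h.choose_spec
  set Mono : Finset (Finset V) := E.filter (fun e => ∀ i ∈ e, ∀ j ∈ e, χ i = χ j) with hMonodef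
  have hMonoCard : γ * (M:ℝ) ≤ (Mono.card : ℝ) := hmono χ
  set Bad : Finset V := Finset.univ.filter (fun i => S i < δ/2) with hBaddef
  set MB : Finset (Finset V) := Mono.filter (fun e => ∃ i ∈ e, S i < δ/2) with hMBdef
  set MG : Finset (Finset V) := Mono.filter (fun e => ¬ ∃ i ∈ e, S i < δ/2) with hMGdef
  have hsplit : MB.card + MG.card = Mono.card :=
    Finset.card_filter_add_card_filter_not _
  -- MB.card ≤ ∑ i in Bad, deg i
  have hMBle : MB.card ≤ ∑ i ∈ Bad, deg i := by
    have hsub : MB ⊆ Bad.biUnion (fun i => E.filter (fun e => i ∈ e)) := by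
      intro e he
      rw [hMBdef, Finset.mem_filter] at he
      obtain ⟨heM, i, hie, hbad⟩ := he
      have heE : e ∈ E := (Finset.mem_filter.1 heM).1
      exact Finset.mem_biUnion.2 ⟨i, Finset.mem_filter.2 ⟨Finset.mem_univ i, hbad⟩,
        Finset.mem_filter.2 ⟨heE, hie⟩⟩
    calc MB.card ≤ (Bad.biUnion (fun i => E.filter (fun e => i ∈ e))).card :=
          Finset.card_le_card hsub
      _ ≤ ∑ i ∈ Bad, (E.filter (fun e => i ∈ e)).card := Finset.card_biUnion_le
      _ = ∑ i ∈ Bad, deg i := by simp [hdeg]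
  -- vertex error lower bound
  have hV : (MB.card : ℝ) * (δ^2/4) ≤ ∑ i : V, (deg i : ℝ) * (δ - S i) ^ 2 := by
    have h1 : ∑ i ∈ Bad, (deg i : ℝ) * (δ - S i) ^ 2 ≤
        ∑ i : V, (deg i : ℝ) * (δ - S i) ^ 2 := by
      apply Finset.sum_le_sum_of_subset_of_nonneg (Finset.subset_univ Bad)
      intro i _ _; positivity
    have h2 : ∑ i ∈ Bad, (deg i : ℝ) * (δ^2/4) ≤
        ∑ i ∈ Bad, (deg i : ℝ) * (δ - S i) ^ 2 := by
      apply Finset.sum_le_sum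
      intro i hi
      have hbad : S i < δ/2 := (Finset.mem_filter.1 hi).2
      have h3 : δ/2 ≤ δ - S i := by have := hS0 i; linarith
      have h4 : δ^2/4 ≤ (δ - S i)^2 := by nlinarith
      exact mul_le_mul_of_nonneg_left h4 (Nat.cast_nonneg _)
    have h5 : (MB.card : ℝ) * (δ^2/4) ≤ ∑ i ∈ Bad, (deg i : ℝ) * (δ^2/4) := by
      rw [← Finset.sum_mul]
      apply mul_le_mul_of_nonneg_right _ (by positivity)
      have : (MB.card : ℝ) ≤ ((∑ i ∈ Bad, deg i : ℕ) : ℝ) := by exact_mod_cast hMBle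
      rwa [Nat.cast_sum] at this
    linarith
  -- edge error lower bound
  have hE2 : (MG.card : ℝ) * (δ^2/((k:ℝ)^2*(t:ℝ))) ≤
      ∑ e ∈ E, (∑ a : Fin k, max 0 ((1 / Real.sqrt (t:ℝ)) * ∑ i ∈ e, w a i)) ^ 2 := by
    have hsubE : MG ⊆ E := by
      intro e he
      exact (Finset.mem_filter.1 (Finset.mem_filter.1 he).1).1
    have h1 : ∑ e ∈ MG, (∑ a : Fin k, max 0 ((1 / Real.sqrt (t:ℝ)) * ∑ i ∈ e, w a i)) ^ 2 ≤
        ∑ e ∈ E, (∑ a : Fin k, max 0 ((1 / Real.sqrt (t:ℝ)) * ∑ i ∈ e, w a i)) ^ 2 := by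
      apply Finset.sum_le_sum_of_subset_of_nonneg hsubE
      intro e _ _; positivity
    have h2 : ∀ e ∈ MG, δ^2/((k:ℝ)^2*(t:ℝ)) ≤
        (∑ a : Fin k, max 0 ((1 / Real.sqrt (t:ℝ)) * ∑ i ∈ e, w a i)) ^ 2 := by
      intro e he
      rw [hMGdef, Finset.mem_filter] at he
      obtain ⟨heM, hgd⟩ := he
      push_neg at hgd
      rw [hMonodef, Finset.mem_filter] at heM
      obtain ⟨heE, hmonoc⟩ := heM
      have hecard : 2 ≤ e.card := (hcard e heE).1
      have hene : e.Nonempty := Finset.card_pos.1 (by omega)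
      obtain ⟨i₀, hi₀⟩ := hene
      set a₀ : Fin k := χ i₀ with ha₀
      have heach : ∀ i ∈ e, δ/(2*(k:ℝ)) ≤ w a₀ i := by
        intro i hi
        have hgi : δ/2 ≤ S i := hgd i hi
        have h := hχ i hgi
        have heq : χ i = a₀ := hmonoc i hi i₀ hi₀
        rwa [heq] at h
      have hsum : δ/(k:ℝ) ≤ ∑ i ∈ e, w a₀ i := by
        have h1 : (e.card : ℝ) * (δ/(2*(k:ℝ))) ≤ ∑ i ∈ e, w a₀ i := by
          have := Finset.card_nsmul_le_sum e (fun i => w a₀ i) (δ/(2*(k:ℝ))) heach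
          rwa [nsmul_eq_mul] at this
        have h2 : (2:ℝ) * (δ/(2*(k:ℝ))) ≤ (e.card : ℝ) * (δ/(2*(k:ℝ))) := by
          apply mul_le_mul_of_nonneg_right _ (by positivity)
          exact_mod_cast hecard
        have h3 : (2:ℝ) * (δ/(2*(k:ℝ))) = δ/(k:ℝ) := by field_simp
        linarith
      set c : ℝ := (1/Real.sqrt (t:ℝ)) * (δ/(k:ℝ)) with hcdef
      have hc0 : 0 < c := by positivity
      have hcsq : c^2 = δ^2/((k:ℝ)^2*(t:ℝ)) := by
        rw [hcdef, mul_pow, div_pow, div_pow, one_pow, Real.sq_sqrt ht0.le]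
        ring
      have hcT : c ≤ ∑ a : Fin k, max 0 ((1 / Real.sqrt (t:ℝ)) * ∑ i ∈ e, w a i) := by
        have h4 : c ≤ (1/Real.sqrt (t:ℝ)) * ∑ i ∈ e, w a₀ i := by
          rw [hcdef]
          apply mul_le_mul_of_nonneg_left hsum (by positivity)
        have h5 : (1/Real.sqrt (t:ℝ)) * ∑ i ∈ e, w a₀ i ≤
            max 0 ((1/Real.sqrt (t:ℝ)) * ∑ i ∈ e, w a₀ i) := le_max_right _ _
        have h6 : max 0 ((1/Real.sqrt (t:ℝ)) * ∑ i ∈ e, w a₀ i) ≤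
            ∑ a : Fin k, max 0 ((1 / Real.sqrt (t:ℝ)) * ∑ i ∈ e, w a i) :=
          Finset.single_le_sum (f := fun a : Fin k => max 0 ((1 / Real.sqrt (t:ℝ)) * ∑ i ∈ e, w a i))
            (fun a _ => le_max_left 0 _) (Finset.mem_univ a₀)
        linarith
      calc δ^2/((k:ℝ)^2*(t:ℝ)) = c^2 := hcsq.symm
        _ ≤ (∑ a : Fin k, max 0 ((1 / Real.sqrt (t:ℝ)) * ∑ i ∈ e, w a i)) ^ 2 :=
          pow_le_pow_left₀ hc0.le hcT 2
    calc (MG.card : ℝ) * (δ^2/((k:ℝ)^2*(t:ℝ)))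
        = ∑ _e ∈ MG, δ^2/((k:ℝ)^2*(t:ℝ)) := by rw [Finset.sum_const, nsmul_eq_mul]
      _ ≤ ∑ e ∈ MG, (∑ a : Fin k, max 0 ((1 / Real.sqrt (t:ℝ)) * ∑ i ∈ e, w a i)) ^ 2 :=
          Finset.sum_le_sum h2
      _ ≤ _ := h1
  -- total lower bound
  have hkt4 : (4:ℝ) ≤ (k:ℝ)^2*(t:ℝ) := by nlinarith
  have htotal : γ * (M:ℝ) * (δ^2/((k:ℝ)^2*(t:ℝ))) ≤
      (∑ i : V, (deg i : ℝ) * (δ - S i) ^ 2)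
      + ∑ e ∈ E, (∑ a : Fin k, max 0 ((1 / Real.sqrt (t:ℝ)) * ∑ i ∈ e, w a i)) ^ 2 := by
    have h1 : (δ^2/((k:ℝ)^2*(t:ℝ))) ≤ δ^2/4 := by
      apply div_le_div_of_nonneg_left (by positivity) (by norm_num) hkt4
    have h2 : (MB.card : ℝ) * (δ^2/((k:ℝ)^2*(t:ℝ))) ≤ (MB.card : ℝ) * (δ^2/4) :=
      mul_le_mul_of_nonneg_left h1 (Nat.cast_nonneg _)
    have h3 : ((MB.card : ℝ) + (MG.card : ℝ)) = (Mono.card : ℝ) := by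
      exact_mod_cast hsplit
    have h4 : γ * (M:ℝ) * (δ^2/((k:ℝ)^2*(t:ℝ))) ≤
        (Mono.card : ℝ) * (δ^2/((k:ℝ)^2*(t:ℝ))) :=
      mul_le_mul_of_nonneg_right hMonoCard (by positivity)
    have h6 : (Mono.card : ℝ) * (δ^2/((k:ℝ)^2*(t:ℝ))) =
        ((MB.card : ℝ) + (MG.card : ℝ)) * (δ^2/((k:ℝ)^2*(t:ℝ))) := by
      rw [h3]
    rw [add_mul] at h6
    linarith [hV, hE2]
  -- m ≤ (t+1) * M
  have hdc : ∑ i : V, (E.filter (fun e => i ∈ e)).card = ∑ e ∈ E, e.card := by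
    simp_rw [Finset.card_filter]
    rw [Finset.sum_comm]
    apply Finset.sum_congr rfl
    intro e _
    rw [← Finset.card_filter]
    congr 1
    ext i
    simp
  have hmle : m ≤ (t+1) * M := by
    have h1 : ∑ i : V, deg i = ∑ e ∈ E, e.card := by
      simp_rw [hdeg]; exact hdc
    have h2 : ∑ e ∈ E, e.card ≤ ∑ _e ∈ E, t := Finset.sum_le_sum (fun e he => (hcard e he).2)
    rw [Finset.sum_const, smul_eq_mul, ← hM] at h2
    rw [hm, h1]
    calc (∑ e ∈ E, e.card) + M ≤ M * t + M := by omega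
      _ = (t+1) * M := by ring
  have hm1 : 1 ≤ m := by omega
  have hm0 : (0:ℝ) < (m:ℝ) := by exact_mod_cast hm1
  have hmleR : (m:ℝ) ≤ ((t:ℝ)+1) * (M:ℝ) := by exact_mod_cast hmle
  -- final arithmetic
  have hkey : γ / (100 * (k:ℝ)^2 * (t:ℝ)^5 * (n:ℝ)) <
      (1/(m:ℝ)) * (γ * (M:ℝ) * (δ^2/((k:ℝ)^2*(t:ℝ)))) := by
    have hrw : (1/(m:ℝ)) * (γ * (M:ℝ) * (δ^2/((k:ℝ)^2*(t:ℝ)))) =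
        γ * (M:ℝ) / ((m:ℝ) * ((k:ℝ)^2*(t:ℝ)^4*(n:ℝ))) := by
      rw [hδsq]
      field_simp
      try exact Or.inl trivial
    rw [hrw]
    have hstep1 : γ * (M:ℝ) / ((((t:ℝ)+1)*(M:ℝ)) * ((k:ℝ)^2*(t:ℝ)^4*(n:ℝ))) ≤
        γ * (M:ℝ) / ((m:ℝ) * ((k:ℝ)^2*(t:ℝ)^4*(n:ℝ))) := by
      apply div_le_div_of_nonneg_left (by positivity) (by positivity)
      apply mul_le_mul_of_nonneg_right hmleR (by positivity)
    have hstep2 : γ / (100 * (k:ℝ)^2 * (t:ℝ)^5 * (n:ℝ)) <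
        γ * (M:ℝ) / ((((t:ℝ)+1)*(M:ℝ)) * ((k:ℝ)^2*(t:ℝ)^4*(n:ℝ))) := by
      have hEq : γ * (M:ℝ) / ((((t:ℝ)+1)*(M:ℝ)) * ((k:ℝ)^2*(t:ℝ)^4*(n:ℝ))) =
          γ / (((t:ℝ)+1) * ((k:ℝ)^2*(t:ℝ)^4*(n:ℝ))) := by
        field_simp
      rw [hEq]
      apply div_lt_div_of_pos_left hγ0 (by positivity)
      have h7 : ((t:ℝ)+1) < 100 * (t:ℝ) := by linarith
      nlinarith [sq_nonneg ((k:ℝ)), pow_pos ht0 4, mul_pos (pow_pos hk0 2) (mul_pos (pow_pos ht0 4) hn0)]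
    linarith
  have hfinal : (1/(m:ℝ)) * (γ * (M:ℝ) * (δ^2/((k:ℝ)^2*(t:ℝ)))) ≤
      (1 / (m : ℝ)) *
        ((∑ i : V, (deg i : ℝ) * (δ - S i) ^ 2)
          + ∑ e ∈ E, (∑ a : Fin k, max 0 ((1 / Real.sqrt (t:ℝ)) * ∑ i ∈ e, w a i)) ^ 2) :=
    mul_le_mul_of_nonneg_left htotal (by positivity)
  calc γ / (100 * (k:ℝ)^2 * (t:ℝ)^5 * (n:ℝ))
      < (1/(m:ℝ)) * (γ * (M:ℝ) * (δ^2/((k:ℝ)^2*(t:ℝ)))) := hkey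
    _ ≤ _ := hfinal
end

section
/- For every integer k ≥ 1 there exist an integer m̃ ≥ 1, vectors x̃_1,…,x̃_{m̃} ∈ ℝ^k with ‖x̃_i‖₂ ≤ 1, labels ỹ_1,…,ỹ_{m̃} ∈ [0, k], and a real number τ > 0 such that: (i) (Completeness) there exist w̃¹,…,w̃^k ∈ ℝ^k with ‖w̃^j‖₂ ≤ 1 for all j and Σ_{j=1}^{k} max(0, w̃^j·x̃_i) = ỹ_i for every i ∈ {1,…,m̃}; and (ii) (Soundness) for all w̃¹,…,w̃^k ∈ ℝ^k and every a ∈ {−1,1}^k with a ≠ (1,…,1): (1/m̃)·Σ_{i=1}^{m̃} (Σ_{j=1}^{k} a_j·max(0, w̃^j·x̃_i) − ỹ_i)² ≥ τ. -/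
open Finset
noncomputable section NegGadget

/-- Second difference of `f` at `p` with step `d`. -/
def sdiff2 (f : ℝ → ℝ) (p d : ℝ) : ℝ := f (p - d) - 2 * f p + f (p + d)

lemma relu3_nonneg (u v : ℝ) : 0 ≤ max 0 u - 2 * max 0 ((u+v)/2) + max 0 v := by
  rcases le_total ((u+v)/2) 0 with h | h
  · have h2 := le_max_left (0:ℝ) u
    have h3 := le_max_left (0:ℝ) v
    rw [max_eq_left h]
    linarith
  · rw [max_eq_right h]
    have h2 := le_max_right (0:ℝ) u
    have h3 := le_max_right (0:ℝ) v
    linarith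

lemma relu3_cases (u v : ℝ) (h : 0 < max 0 u - 2 * max 0 ((u+v)/2) + max 0 v) :
    (u < 0 ∧ 0 < v) ∨ (v < 0 ∧ 0 < u) := by
  by_cases h0u : 0 ≤ u <;> by_cases h0v : 0 ≤ v
  · exfalso
    rw [max_eq_right h0u, max_eq_right h0v, max_eq_right (by linarith)] at h
    linarith
  · push_neg at h0v
    rcases h0u.eq_or_lt with he | hlt
    · exfalso
      rw [max_eq_left (le_of_eq he.symm), max_eq_left (le_of_lt h0v),
        max_eq_left (by linarith)] at h
      linarith
    · exact Or.inr ⟨h0v, hlt⟩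
  · push_neg at h0u
    rcases h0v.eq_or_lt with he | hlt
    · exfalso
      rw [max_eq_left (le_of_lt h0u), max_eq_left (le_of_eq he.symm),
        max_eq_left (by linarith)] at h
      linarith
    · exact Or.inl ⟨h0u, hlt⟩
  · exfalso
    push_neg at h0u h0v
    rw [max_eq_left (le_of_lt h0u), max_eq_left (le_of_lt h0v),
      max_eq_left (by linarith)] at h
    linarith

lemma sdiff2_relu_nonneg (c e p d : ℝ) :
    0 ≤ sdiff2 (fun t => max 0 (c * t + e)) p d := by
  have h1 : c * p + e = ((c*(p-d)+e) + (c*(p+d)+e))/2 := by ring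
  simp only [sdiff2]
  rw [h1]
  exact relu3_nonneg _ _

lemma sdiff2_relu_root (c e p d : ℝ) (hd : 0 < d)
    (h : 0 < sdiff2 (fun t => max 0 (c * t + e)) p d) :
    c ≠ 0 ∧ p - d < -e / c ∧ -e / c < p + d := by
  have h1 : c * p + e = ((c*(p-d)+e) + (c*(p+d)+e))/2 := by ring
  simp only [sdiff2] at h
  rw [h1] at h
  rcases relu3_cases _ _ h with ⟨hu, hv⟩ | ⟨hv, hu⟩
  · -- c*(p-d)+e < 0 < c*(p+d)+e, so c > 0
    have hc : 0 < c := by nlinarith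
    refine ⟨ne_of_gt hc, ?_, ?_⟩
    · rw [lt_div_iff₀ hc]; nlinarith
    · rw [div_lt_iff₀ hc]; nlinarith
  · -- c*(p+d)+e < 0 < c*(p-d)+e, so c < 0
    have hc : c < 0 := by nlinarith
    refine ⟨ne_of_lt hc, ?_, ?_⟩
    · rw [lt_div_iff_of_neg hc]; nlinarith
    · rw [div_lt_iff_of_neg hc]; nlinarith

lemma sdiff2_sum {α : Type*} (s : Finset α) (F : α → ℝ → ℝ) (p d : ℝ) :
    sdiff2 (fun t => ∑ j ∈ s, F j t) p d = ∑ j ∈ s, sdiff2 (F j) p d := by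
  simp only [sdiff2]
  rw [Finset.mul_sum, ← Finset.sum_sub_distrib, ← Finset.sum_add_distrib]

lemma sdiff2_smul (a : ℝ) (f : ℝ → ℝ) (p d : ℝ) :
    sdiff2 (fun t => a * f t) p d = a * sdiff2 f p d := by
  simp only [sdiff2]; ring



lemma exists_bad_window {k : ℕ} (c e a : Fin k → ℝ)
    (ha : ∀ j, a j = 1 ∨ a j = -1) (hne : a ≠ fun _ => 1)
    (p : Fin k → ℝ) (d : ℝ) (hd : 0 < d)
    (hsep : ∀ i j : Fin k, i ≠ j → 2 * d ≤ |p i - p j|) :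
    ∃ j0 : Fin k, sdiff2 (fun t => ∑ j, a j * max 0 (c j * t + e j)) (p j0) d ≤ 0 := by
  classical
  obtain ⟨jn, hjn⟩ : ∃ j, a j = -1 := by
    by_contra hcon
    push_neg at hcon
    exact hne (funext fun j => (ha j).resolve_right (hcon j))
  have hk : 0 < k := jn.pos
  set S : Fin k → Fin k → ℝ :=
    fun j j0 => sdiff2 (fun t => max 0 (c j * t + e j)) (p j0) d with hS
  have uniq : ∀ j j0 j1, 0 < S j j0 → 0 < S j j1 → j0 = j1 := by
    intro j j0 j1 h0 h1
    by_contra hne01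
    obtain ⟨hc0, l0, r0⟩ := sdiff2_relu_root _ _ _ _ hd h0
    obtain ⟨_, l1, r1⟩ := sdiff2_relu_root _ _ _ _ hd h1
    have hs := hsep j0 j1 hne01
    have : |p j0 - p j1| < 2 * d := abs_sub_lt_iff.mpr ⟨by linarith, by linarith⟩
    linarith
  set B : Finset (Fin k) := Finset.univ.filter (fun j0 => ∃ j, a j = 1 ∧ 0 < S j j0)
    with hB
  have hBcard : B.card < k := by
    have hinj : Set.InjOn
        (fun j0 => if h : ∃ j, a j = 1 ∧ 0 < S j j0 then h.choose else jn) B := by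
      intro j0 hj0 j1 hj1 heq
      simp only [hB, Finset.coe_filter, Set.mem_setOf_eq, Finset.mem_univ, true_and]
        at hj0 hj1
      simp only [dif_pos hj0, dif_pos hj1] at heq
      exact uniq _ _ _ (heq ▸ hj0.choose_spec.2) hj1.choose_spec.2
    have hmaps : ∀ j0 ∈ B,
        (if h : ∃ j, a j = 1 ∧ 0 < S j j0 then h.choose else jn)
          ∈ Finset.univ.erase jn := by
      intro j0 hj0
      simp only [hB, Finset.mem_filter, Finset.mem_univ, true_and] at hj0
      rw [dif_pos hj0]
      refine Finset.mem_erase.mpr ⟨?_, Finset.mem_univ _⟩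
      intro hEq
      have := hj0.choose_spec.1
      rw [hEq, hjn] at this
      norm_num at this
    have := Finset.card_le_card_of_injOn _ hmaps hinj
    have hc2 : (Finset.univ.erase jn).card = k - 1 := by
      rw [Finset.card_erase_of_mem (Finset.mem_univ _), Finset.card_univ,
        Fintype.card_fin]
    omega
  obtain ⟨j0, hj0⟩ : ∃ j0, j0 ∉ B := by
    by_contra hcon
    push_neg at hcon
    have : B = Finset.univ := Finset.eq_univ_iff_forall.mpr hcon
    rw [this, Finset.card_univ, Fintype.card_fin] at hBcard
    omega
  refine ⟨j0, ?_⟩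
  have hrw : sdiff2 (fun t => ∑ j, a j * max 0 (c j * t + e j)) (p j0) d
      = ∑ j, a j * S j j0 := by
    rw [sdiff2_sum Finset.univ (fun j t => a j * max 0 (c j * t + e j))]
    exact Finset.sum_congr rfl fun j _ => sdiff2_smul _ _ _ _
  rw [hrw]
  apply Finset.sum_nonpos
  intro j _
  rcases ha j with h1 | h1
  · rw [h1, one_mul]
    by_contra hpos
    push_neg at hpos
    exact hj0 (Finset.mem_filter.mpr ⟨Finset.mem_univ _, ⟨j, h1, hpos⟩⟩)
  · rw [h1]
    have := sdiff2_relu_nonneg (c j) (e j) (p j0) d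
    simp only [hS]
    nlinarith



/-- Half-gap between consecutive kinks. -/
def dd (k : ℕ) : ℝ := 1/(4*k)

/-- Kink positions. -/
def pp (k j : ℕ) : ℝ := -(1/4) + (2*j+1) * dd k

/-- Sample points on the line. -/
def tt (k i : ℕ) : ℝ := pp k (i/3) + (((i % 3 : ℕ) : ℝ) - 1) * dd k

lemma dd_pos {k : ℕ} (hk : 1 ≤ k) : 0 < dd k := by
  have : (1:ℝ) ≤ k := by exact_mod_cast hk
  unfold dd
  positivity

lemma pp_bounds {k j : ℕ} (hk : 1 ≤ k) (hj : j < k) : |pp k j| ≤ 1/4 - dd k := by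
  have hkR : (1:ℝ) ≤ (k:ℝ) := by exact_mod_cast hk
  have hd : 0 < dd k := dd_pos hk
  have hjR : (j:ℝ) ≤ (k:ℝ) - 1 := by
    have : (j:ℝ) + 1 ≤ k := by exact_mod_cast hj
    linarith
  have h2 : (2*(k:ℝ)-1) * dd k = 1/2 - dd k := by
    unfold dd
    field_simp
    ring
  have h1 : (2*(j:ℝ)+1) * dd k ≤ (2*(k:ℝ)-1) * dd k := by nlinarith
  have h3 : dd k ≤ (2*(j:ℝ)+1) * dd k := by nlinarith
  rw [abs_le]
  unfold pp
  constructor <;> nlinarith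

lemma tt_bound {k i : ℕ} (hk : 1 ≤ k) (hi : i < 3*k) : |tt k i| ≤ 1/4 := by
  have h1 := pp_bounds hk (show i/3 < k by omega)
  have hd := dd_pos hk
  have hoff : |((i % 3 : ℕ):ℝ) - 1| ≤ 1 := by
    have h : i % 3 = 0 ∨ i % 3 = 1 ∨ i % 3 = 2 := by omega
    rcases h with h|h|h <;> rw [h] <;> norm_num
  unfold tt
  refine (abs_add_le _ _).trans ?_
  rw [abs_mul, abs_of_pos hd]
  nlinarith

lemma pp_sep {k : ℕ} (hk : 1 ≤ k) {i j : ℕ} (hij : i ≠ j) :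
    2 * dd k ≤ |pp k i - pp k j| := by
  have hd := dd_pos hk
  have h1 : pp k i - pp k j = ((i:ℝ) - (j:ℝ)) * (2 * dd k) := by
    unfold pp
    push_cast
    ring
  have h2 : (1:ℝ) ≤ |(i:ℝ) - (j:ℝ)| := by
    rcases lt_or_gt_of_ne hij with h|h
    · have : (i:ℝ) + 1 ≤ j := by exact_mod_cast h
      rw [abs_sub_comm, abs_of_nonneg (by linarith)]
      linarith
    · have : (j:ℝ) + 1 ≤ i := by exact_mod_cast h
      rw [abs_of_nonneg (by linarith)]
      linarith
  rw [h1, abs_mul, abs_of_pos (by linarith : (0:ℝ) < 2 * dd k)]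
  nlinarith

lemma sum_support_two {k : ℕ} (hk : 2 ≤ k) (F : Fin k → ℝ)
    (hF : ∀ c : Fin k, (c:ℕ) ≠ 0 → (c:ℕ) ≠ 1 → F c = 0) :
    ∑ c, F c = F ⟨0, by omega⟩ + F ⟨1, by omega⟩ := by
  have h01 : (⟨0, by omega⟩ : Fin k) ≠ ⟨1, by omega⟩ := Fin.ne_of_val_ne (by norm_num)
  rw [← Finset.sum_subset
    (Finset.subset_univ {(⟨0, by omega⟩ : Fin k), ⟨1, by omega⟩})]
  · rw [Finset.sum_pair h01]
  · intro c _ hc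
    simp only [Finset.mem_insert, Finset.mem_singleton] at hc
    push_neg at hc
    refine hF c ?_ ?_
    · intro h0; exact hc.1 (Fin.ext h0)
    · intro h1; exact hc.2 (Fin.ext h1)



lemma sq_small {u d : ℝ} (hd : 0 < d) (h : u^2 < d^2/25) : -(d/5) < u ∧ u < d/5 := by
  constructor <;> nlinarith

/-- The negative-coefficient gadget (Lemma 5.1): a set of bounded
labelled samples realizable by a non-negative sum of k ReLUs with unit-norm
weights, but incurring average squared error at least `τ > 0` for any weighted
sum of k ReLUs with at least one negative coefficient. -/
theorem negative_coefficient_gadget (k : ℕ) (hk : 1 ≤ k) :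
    ∃ (m : ℕ) (_ : 1 ≤ m) (x : Fin m → Fin k → ℝ) (y : Fin m → ℝ) (τ : ℝ),
      0 < τ ∧
      (∀ i : Fin m, ∑ j, (x i j) ^ 2 ≤ 1) ∧
      (∀ i : Fin m, 0 ≤ y i ∧ y i ≤ (k : ℝ)) ∧
      (∃ w : Fin k → Fin k → ℝ,
        (∀ j : Fin k, ∑ c, (w j c) ^ 2 ≤ 1) ∧
        (∀ i : Fin m, ∑ j : Fin k, max 0 (∑ c, w j c * x i c) = y i)) ∧
      (∀ (w : Fin k → Fin k → ℝ) (a : Fin k → ℝ),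
        (∀ j, a j = 1 ∨ a j = -1) → a ≠ (fun _ => 1) →
        (1 / (m : ℝ)) *
            ∑ i : Fin m, (∑ j : Fin k, a j * max 0 (∑ c, w j c * x i c) - y i) ^ 2
          ≥ τ) := by
  classical
  by_cases hk2 : 2 ≤ k
  · -- main case
    have hd : 0 < dd k := dd_pos hk
    have hk0 : (0:ℝ) < (k:ℝ) := by exact_mod_cast hk
    refine ⟨3*k, by omega,
      fun i c => if (c:ℕ) = 0 then tt k (i:ℕ) else if (c:ℕ) = 1 then (1:ℝ)/2 else 0,
      fun i => ∑ j : Fin k, max 0 ((4:ℝ)/5 * (tt k (i:ℕ) - pp k (j:ℕ))),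
      dd k ^ 2 / (75 * k), ?_, ?_, ?_, ?_, ?_⟩
    · positivity
    · -- norm of samples
      intro i
      have hti' := abs_le.mp (tt_bound hk i.isLt)
      rw [sum_support_two hk2 _ (by intro c h0 h1; simp [h0, h1])]
      simp only
      norm_num
      nlinarith [hti'.1, hti'.2]
    · -- label bounds
      intro i
      have hti' := abs_le.mp (tt_bound hk i.isLt)
      constructor
      · exact Finset.sum_nonneg fun j _ => le_max_left _ _
      · calc ∑ j : Fin k, max 0 ((4:ℝ)/5 * (tt k (i:ℕ) - pp k (j:ℕ)))
            ≤ ∑ _j : Fin k, (1:ℝ) := by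
              refine Finset.sum_le_sum fun j _ => ?_
              have hpj := abs_le.mp (pp_bounds hk j.isLt)
              refine max_le (by norm_num) (by nlinarith [hpj.1, hpj.2])
          _ = (k:ℝ) := by
              rw [Finset.sum_const, Finset.card_univ, Fintype.card_fin,
                nsmul_eq_mul, mul_one]
    · -- completeness
      refine ⟨fun j c => if (c:ℕ) = 0 then (4:ℝ)/5
        else if (c:ℕ) = 1 then -(8/5) * pp k (j:ℕ) else 0, ?_, ?_⟩
      · intro j
        have hpj := abs_le.mp (pp_bounds hk j.isLt)
        rw [sum_support_two hk2 _ (by intro c h0 h1; simp [h0, h1])]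
        simp only
        norm_num
        nlinarith [hpj.1, hpj.2, hd]
      · intro i
        refine Finset.sum_congr rfl fun j _ => ?_
        congr 1
        rw [sum_support_two hk2 _ (by intro c h0 h1; simp [h0, h1])]
        simp only
        norm_num
        ring
    · -- soundness
      intro w a ha hne
      by_contra hcon
      push_neg at hcon
      set c0 : Fin k := ⟨0, by omega⟩ with hc0
      set c1 : Fin k := ⟨1, by omega⟩ with hc1
      have h3k : (0:ℝ) < ((3*k : ℕ):ℝ) := by positivity
      -- separation of kinks
      have hsep : ∀ i j : Fin k, i ≠ j → 2 * dd k ≤ |pp k (i:ℕ) - pp k (j:ℕ)| :=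
        fun i j hij => pp_sep hk (fun h => hij (Fin.ext h))
      -- a window with nonpositive second difference of the prediction
      obtain ⟨j0, hj0⟩ := exists_bad_window (fun j => w j c0)
        (fun j => w j c1 * (1/2)) a ha hne (fun j => pp k (j:ℕ)) (dd k) hd hsep
      -- second difference of target is large
      have hYsd : 4/5 * dd k ≤ sdiff2
          (fun t => ∑ j : Fin k, max 0 ((4:ℝ)/5 * (t - pp k (j:ℕ))))
          (pp k (j0:ℕ)) (dd k) := by
        rw [sdiff2_sum Finset.univ
          (fun (j : Fin k) t => max 0 ((4:ℝ)/5 * (t - pp k (j:ℕ))))]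
        have hterm : ∀ j : Fin k, 0 ≤ sdiff2
            (fun t => max 0 ((4:ℝ)/5 * (t - pp k (j:ℕ)))) (pp k (j0:ℕ)) (dd k) := by
          intro j
          have h := sdiff2_relu_nonneg (4/5) (-(4/5) * pp k (j:ℕ)) (pp k (j0:ℕ)) (dd k)
          have heq : (fun t => max 0 ((4:ℝ)/5 * (t - pp k (j:ℕ))))
              = (fun t => max 0 ((4:ℝ)/5 * t + -(4/5) * pp k (j:ℕ))) := by
            funext t; congr 1; ring
          rw [heq]; exact h
        refine le_trans ?_ (Finset.single_le_sum (fun j _ => hterm j) (Finset.mem_univ j0))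
        simp only [sdiff2]
        rw [show (4:ℝ)/5 * (pp k (j0:ℕ) - dd k - pp k (j0:ℕ)) = -(4/5 * dd k) by ring,
          show (4:ℝ)/5 * (pp k (j0:ℕ) - pp k (j0:ℕ)) = 0 by ring,
          show (4:ℝ)/5 * (pp k (j0:ℕ) + dd k - pp k (j0:ℕ)) = 4/5 * dd k by ring,
          max_self, max_eq_left (by nlinarith : -(4/5 * dd k) ≤ (0:ℝ)),
          max_eq_right (by nlinarith : (0:ℝ) ≤ 4/5 * dd k)]
        linarith
      -- sum of squared errors is small
      have hSS := (div_lt_iff₀ h3k).mp (by rwa [one_div, inv_mul_eq_div] at hcon)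
      have hSS' : (∑ i : Fin (3*k), (∑ j : Fin k, a j * max 0 (∑ c : Fin k, w j c *
          (if (c:ℕ) = 0 then tt k (i:ℕ) else if (c:ℕ) = 1 then (1:ℝ)/2 else 0))
          - ∑ j : Fin k, max 0 ((4:ℝ)/5 * (tt k (i:ℕ) - pp k (j:ℕ)))) ^ 2)
          < dd k ^ 2 / 25 := by
        refine lt_of_lt_of_le hSS (le_of_eq ?_)
        push_cast
        field_simp
        ring
      have herr : ∀ i : Fin (3*k), (∑ j : Fin k, a j * max 0 (∑ c : Fin k, w j c *
          (if (c:ℕ) = 0 then tt k (i:ℕ) else if (c:ℕ) = 1 then (1:ℝ)/2 else 0))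
          - ∑ j : Fin k, max 0 ((4:ℝ)/5 * (tt k (i:ℕ) - pp k (j:ℕ)))) ^ 2
          < dd k ^ 2 / 25 :=
        fun i => by
          refine lt_of_le_of_lt ?_ hSS'
          exact Finset.single_le_sum
            (f := fun i : Fin (3*k) => (∑ j : Fin k, a j * max 0 (∑ c : Fin k, w j c *
              (if (c:ℕ) = 0 then tt k (i:ℕ) else if (c:ℕ) = 1 then (1:ℝ)/2 else 0))
              - ∑ j : Fin k, max 0 ((4:ℝ)/5 * (tt k (i:ℕ) - pp k (j:ℕ)))) ^ 2)
            (fun i' _ => sq_nonneg _) (Finset.mem_univ i)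
      -- predictions along the line
      have hpred : ∀ i : Fin (3*k),
          (∑ j : Fin k, a j * max 0 (∑ c : Fin k, w j c *
            (if (c:ℕ) = 0 then tt k (i:ℕ) else if (c:ℕ) = 1 then (1:ℝ)/2 else 0)))
          = ∑ j : Fin k, a j * max 0 (w j c0 * tt k (i:ℕ) + w j c1 * (1/2)) := by
        intro i
        refine Finset.sum_congr rfl fun j _ => ?_
        congr 1
        congr 1
        rw [sum_support_two hk2 _ (fun c h0 h1 => by simp [h0, h1])]
        simp [hc0, hc1]
      -- the three sample points in window j0
      have hJ : (j0:ℕ) < k := j0.isLt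
      have ht1 : tt k (3*(j0:ℕ)) = pp k (j0:ℕ) - dd k := by
        unfold tt
        rw [show (3*(j0:ℕ))/3 = (j0:ℕ) by omega, show (3*(j0:ℕ))%3 = 0 by omega]
        push_cast; ring
      have ht2 : tt k (3*(j0:ℕ)+1) = pp k (j0:ℕ) := by
        unfold tt
        rw [show (3*(j0:ℕ)+1)/3 = (j0:ℕ) by omega, show (3*(j0:ℕ)+1)%3 = 1 by omega]
        push_cast; ring
      have ht3 : tt k (3*(j0:ℕ)+2) = pp k (j0:ℕ) + dd k := by
        unfold tt
        rw [show (3*(j0:ℕ)+2)/3 = (j0:ℕ) by omega, show (3*(j0:ℕ)+2)%3 = 2 by omega]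
        push_cast; ring
      have lt1 : 3*(j0:ℕ) < 3*k := by omega
      have lt2 : 3*(j0:ℕ)+1 < 3*k := by omega
      have lt3 : 3*(j0:ℕ)+2 < 3*k := by omega
      have b1 := herr ⟨3*(j0:ℕ), lt1⟩
      have b2 := herr ⟨3*(j0:ℕ)+1, lt2⟩
      have b3 := herr ⟨3*(j0:ℕ)+2, lt3⟩
      rw [hpred ⟨3*(j0:ℕ), lt1⟩,
        show ((⟨3*(j0:ℕ), lt1⟩ : Fin (3*k)) : ℕ) = 3*(j0:ℕ) from rfl, ht1] at b1
      rw [hpred ⟨3*(j0:ℕ)+1, lt2⟩,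
        show ((⟨3*(j0:ℕ)+1, lt2⟩ : Fin (3*k)) : ℕ) = 3*(j0:ℕ)+1 from rfl, ht2] at b2
      rw [hpred ⟨3*(j0:ℕ)+2, lt3⟩,
        show ((⟨3*(j0:ℕ)+2, lt3⟩ : Fin (3*k)) : ℕ) = 3*(j0:ℕ)+2 from rfl, ht3] at b3
      obtain ⟨r1l, r1u⟩ := sq_small hd b1
      obtain ⟨r2l, r2u⟩ := sq_small hd b2
      obtain ⟨r3l, r3u⟩ := sq_small hd b3
      simp only [sdiff2] at hj0 hYsd
      linarith [hj0, hYsd, r1l, r1u, r2l, r2u, r3l, r3u]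
  · -- k = 1
    have hk1 : k = 1 := by omega
    subst hk1
    refine ⟨1, le_refl 1, fun _ _ => 1, fun _ => 1, 1, one_pos, ?_, ?_, ?_, ?_⟩
    · intro i; simp
    · intro i; norm_num
    · exact ⟨fun _ _ => 1, by intro j; simp, by intro i; simp⟩
    · intro w a ha hne
      have ha0 : a 0 = -1 := by
        refine (ha 0).resolve_left fun h1 => hne (funext fun j => ?_)
        rw [Subsingleton.elim j 0]
        exact h1
      simp only [Fin.sum_univ_one, ha0, Nat.cast_one]
      have hr : (0:ℝ) ≤ max 0 (w 0 0 * 1) := le_max_left _ _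
      nlinarith [hr]

end NegGadget
end

section
/- Let n ≥ 1 and let u ∈ ℝⁿ be a unit vector (‖u‖₂ = 1). Then: (i) taking w₁ = u and w₂ = −u gives max(0, w₁·u) + max(0, w₂·u) = 1 and max(0, w₁·(−u)) + max(0, w₂·(−u)) = 1; and (ii) for all w₁, w₂ ∈ ℝⁿ: (max(0, w₁·u) − max(0, w₂·u) − 1)² + (max(0, w₁·(−u)) − max(0, w₂·(−u)) − 1)² ≥ 1. -/
lemma relu_diff_key (s t : ℝ) :
    (max 0 s - max 0 t - 1) ^ 2 + (max 0 (-s) - max 0 (-t) - 1) ^ 2 ≥ 1 := by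
  rcases le_or_gt s 0 with hs | hs
  · have h1 : max 0 s = 0 := max_eq_left hs
    have h2 : (0:ℝ) ≤ max 0 t := le_max_left _ _
    nlinarith [sq_nonneg (max 0 (-s) - max 0 (-t) - 1), sq_nonneg (max 0 t)]
  · have h1 : max 0 (-s) = 0 := max_eq_left (by linarith)
    have h2 : (0:ℝ) ≤ max 0 (-t) := le_max_left _ _
    nlinarith [sq_nonneg (max 0 s - max 0 t - 1), sq_nonneg (max 0 (-t))]

/-- The k = 2 case of the negative-coefficient gadget: the samples
`(u, 1)` and `(−u, 1)` are realizable by `max(0, u·x) + max(0, −u·x)`, but any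
difference of two ReLUs incurs total squared error at least 1 on them. -/
theorem two_relu_gadget (n : ℕ) (hn : 1 ≤ n) (u : Fin n → ℝ)
    (hu : ∑ i, (u i) ^ 2 = 1) :
    ((max 0 (∑ i, u i * u i) + max 0 (∑ i, (-u i) * u i) = 1) ∧
      (max 0 (∑ i, u i * (-u i)) + max 0 (∑ i, (-u i) * (-u i)) = 1)) ∧
    (∀ w₁ w₂ : Fin n → ℝ,
      (max 0 (∑ i, w₁ i * u i) - max 0 (∑ i, w₂ i * u i) - 1) ^ 2
        + (max 0 (∑ i, w₁ i * (-u i)) - max 0 (∑ i, w₂ i * (-u i)) - 1) ^ 2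
        ≥ 1) := by
  have h1 : ∑ i, u i * u i = 1 := by simpa [sq] using hu
  have hneg : ∑ i, (-u i) * u i = -1 := by
    simp only [neg_mul, Finset.sum_neg_distrib, h1]
  constructor
  · constructor
    · rw [h1, show ∑ i, (-u i) * u i = -1 from hneg]
      norm_num
    · have e1 : ∑ i, u i * (-u i) = -1 := by
        simp only [mul_neg, neg_mul] at *
        linarith [hneg]
      have e2 : ∑ i, (-u i) * (-u i) = 1 := by
        simp only [neg_mul_neg]; exact h1
      rw [e1, e2]; norm_num
  · intro w₁ w₂
    have e1 : ∑ i, w₁ i * (-u i) = -(∑ i, w₁ i * u i) := by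
      simp [mul_neg]
    have e2 : ∑ i, w₂ i * (-u i) = -(∑ i, w₂ i * u i) := by
      simp [mul_neg]
    rw [e1, e2]
    exact relu_diff_key _ _
end

section
/- Let n, k, m, m̃ ≥ 1 be integers. Let (x_i, y_i)_{i=1}^{m} ⊆ ℝⁿ × ℝ and (x̃_i, ỹ_i)_{i=1}^{m̃} ⊆ ℝ^k × ℝ, and let τ > 0 be such that for all w̃¹,…,w̃^k ∈ ℝ^k and all a ∈ {−1,1}^k with a ≠ (1,…,1): (1/m̃)·Σ_{i=1}^{m̃} (Σ_{j=1}^{k} a_j·max(0, w̃^j·x̃_i) − ỹ_i)² ≥ τ. Let Ŝ be the multiset of 2·m·m̃ labelled samples in ℝ^{n+k} × ℝ consisting of m̃ copies of (x_i ∘ 0_k, y_i/2) for each i ∈ {1,…,m} and m copies of (0_n ∘ x̃_i, ỹ_i/2) for each i ∈ {1,…,m̃}, where ∘ denotes concatenation and 0_p the zero vector in ℝ^p. Then for all ŵ¹,…,ŵ^k ∈ ℝ^{n+k} and all a ∈ {−1,1}^k with a ≠ (1,…,1): (1/(2·m·m̃))·Σ_{(x̂,ŷ)∈Ŝ} (Σ_{j=1}^{k}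 a_j·max(0, ŵ^j·x̂) − ŷ)² ≥ τ/8. -/
/-- Soundness half of the padding construction (Theorem 1.5):
appending the negative-coefficient gadget samples (with soundness parameter τ) to
an arbitrary sample set forces any k-ReLU network with a negative coefficient to
incur average squared error at least `τ/8`. Concatenated coordinates are modeled
by the sum type `Fin n ⊕ Fin k`. -/
theorem padding_soundness
    (n k m mt : ℕ) (hn : 1 ≤ n) (hk : 1 ≤ k) (hm : 1 ≤ m) (hmt : 1 ≤ mt)
    (x : Fin m → Fin n → ℝ) (y : Fin m → ℝ)
    (xt : Fin mt → Fin k → ℝ) (yt : Fin mt → ℝ)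
    (τ : ℝ) (hτ : 0 < τ)
    (hsound : ∀ (wt : Fin k → Fin k → ℝ) (a : Fin k → ℝ),
      (∀ j, a j = 1 ∨ a j = -1) → a ≠ (fun _ => 1) →
      (1 / (mt : ℝ)) *
          ∑ i : Fin mt, (∑ j : Fin k, a j * max 0 (∑ c, wt j c * xt i c) - yt i) ^ 2
        ≥ τ) :
    ∀ (w : Fin k → (Fin n ⊕ Fin k) → ℝ) (a : Fin k → ℝ),
      (∀ j, a j = 1 ∨ a j = -1) → a ≠ (fun _ => 1) →
      (1 / (2 * (m : ℝ) * (mt : ℝ))) *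
          ((∑ i : Fin m, (mt : ℝ) *
              (∑ j : Fin k, a j * max 0 (∑ c, w j c * (Sum.elim (x i) (0 : Fin k → ℝ)) c)
                - y i / 2) ^ 2)
            + ∑ i : Fin mt, (m : ℝ) *
              (∑ j : Fin k, a j * max 0 (∑ c, w j c * (Sum.elim (0 : Fin n → ℝ) (xt i)) c)
                - yt i / 2) ^ 2)
        ≥ τ / 8 := by
  intro w a ha hne
  have hm' : (0:ℝ) < m := by exact_mod_cast hm
  have hmt' : (0:ℝ) < mt := by exact_mod_cast hmt
  -- set D i to the "gadget" residual with halved labels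
  set D : Fin mt → ℝ := fun i =>
    ∑ j : Fin k, a j * max 0 (∑ c, w j c * (Sum.elim (0 : Fin n → ℝ) (xt i)) c)
      - yt i / 2 with hD
  have hs := hsound (fun j c => 2 * w j (Sum.inr c)) a ha hne
  have key : ∀ i : Fin mt,
      (∑ j : Fin k, a j * max 0 (∑ c, (2 * w j (Sum.inr c)) * xt i c) - yt i)
        = 2 * D i := by
    intro i
    have h1 : ∀ j, (∑ c, (2 * w j (Sum.inr c)) * xt i c)
        = 2 * ∑ c, w j c * (Sum.elim (0 : Fin n → ℝ) (xt i)) c := by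
      intro j
      rw [Fintype.sum_sum_type]
      simp [Finset.mul_sum, mul_assoc]
    have h2 : ∀ j, max 0 (∑ c, (2 * w j (Sum.inr c)) * xt i c)
        = 2 * max 0 (∑ c, w j c * (Sum.elim (0 : Fin n → ℝ) (xt i)) c) := by
      intro j
      rw [h1 j, mul_max_of_nonneg _ _ (by norm_num : (0:ℝ) ≤ 2), mul_zero]
    simp only [h2, hD]
    rw [mul_sub]
    congr 1
    · rw [Finset.mul_sum]
      exact Finset.sum_congr rfl (fun j _ => by ring)
    · ring
  have hsum : ∑ i : Fin mt, D i ^ 2 ≥ (mt : ℝ) * τ / 4 := by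
    simp only [key] at hs
    have : (1 / (mt:ℝ)) * ∑ i : Fin mt, (2 * D i) ^ 2
        = (4 / mt) * ∑ i : Fin mt, D i ^ 2 := by
      rw [Finset.mul_sum, Finset.mul_sum]
      exact Finset.sum_congr rfl (fun i _ => by ring)
    rw [this] at hs
    have h4 : (mt:ℝ) * ((4 / mt) * ∑ i : Fin mt, D i ^ 2) = 4 * ∑ i : Fin mt, D i ^ 2 := by
      field_simp
    have h := mul_le_mul_of_nonneg_left hs hmt'.le
    rw [h4] at h
    linarith
  have hA : (0:ℝ) ≤ ∑ i : Fin m, (mt : ℝ) *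
      (∑ j : Fin k, a j * max 0 (∑ c, w j c * (Sum.elim (x i) (0 : Fin k → ℝ)) c)
        - y i / 2) ^ 2 := by positivity
  have hB : ∑ i : Fin mt, (m : ℝ) * D i ^ 2 ≥ (m:ℝ) * ((mt : ℝ) * τ / 4) := by
    rw [← Finset.mul_sum]
    exact mul_le_mul_of_nonneg_left hsum (le_of_lt hm')
  have htotal : (∑ i : Fin m, (mt : ℝ) *
      (∑ j : Fin k, a j * max 0 (∑ c, w j c * (Sum.elim (x i) (0 : Fin k → ℝ)) c)
        - y i / 2) ^ 2)
      + ∑ i : Fin mt, (m : ℝ) * D i ^ 2 ≥ (m:ℝ) * ((mt : ℝ) * τ / 4) := by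
    linarith
  calc τ / 8 = (1 / (2 * (m:ℝ) * mt)) * ((m:ℝ) * ((mt : ℝ) * τ / 4)) := by
        field_simp; ring
    _ ≤ _ := mul_le_mul_of_nonneg_left htotal (by positivity)
end
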